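/- arXiv:2311.00345 — 9 statements merged into one kernel-verified Lean document; each statement's English description precedes it below -/
import Mathlib

section
/- Let G be a Hausdorff topological group which is ω-balanced and a q-space. Then for each open neighborhood O of the identity in G there exists a countably compact invariant (normal) subgroup H of G which is of countable character in G and satisfies H ⊆ O. -/
open Filter Topology Set Pointwise TopologicalSpace

universe u

section Defs

variable {X : Type*}

/-- A subset `s` of a topological space is countably compact (in the ambient space) if every
countable open cover of `s` (indexed by `ℕ`) has a finite subcover. -/
def IsCountablyCompactIn [TopologicalSpace X] (s : Set X) : Prop :=
  ∀ U : ℕ → Set X, (∀ n, IsOpen (U n)) → s ⊆ ⋃ n, U n → ∃ t : Finset ℕ, s ⊆ ⋃ n ∈ t, U n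

/-- `U` is a q-sequence at `x`: a sequence of open neighbourhoods of `x` such that every
sequence of points chosen from the `U n` has an accumulation (cluster) point in `X`. -/
def IsQSequenceAt [TopologicalSpace X] (x : X) (U : ℕ → Set X) : Prop :=
  (∀ n, IsOpen (U n) ∧ x ∈ U n) ∧
    ∀ u : ℕ → X, (∀ n, u n ∈ U n) → ∃ p : X, MapClusterPt p Filter.atTop u

/-- A space is a q-space if every point has a q-sequence. -/
def QSpace (X : Type*) [TopologicalSpace X] : Prop :=
  ∀ x : X, ∃ U : ℕ → Set X, IsQSequenceAt x U

/-- A space is a strict q-space if every point has a q-sequence whose intersection is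
sequentially compact. -/
def StrictQSpace (X : Type*) [TopologicalSpace X] : Prop :=
  ∀ x : X, ∃ U : ℕ → Set X, IsQSequenceAt x U ∧ IsSeqCompact (⋂ n, U n)

/-- `U` is a strong q-sequence at `x`: a sequence of open neighbourhoods of `x` such that every
sequence of points chosen from the `U n` has a convergent subsequence. -/
def IsStrongQSequenceAt [TopologicalSpace X] (x : X) (U : ℕ → Set X) : Prop :=
  (∀ n, IsOpen (U n) ∧ x ∈ U n) ∧
    ∀ u : ℕ → X, (∀ n, u n ∈ U n) →
      ∃ (p : X) (φ : ℕ → ℕ), StrictMono φ ∧ Filter.Tendsto (u ∘ φ) Filter.atTop (nhds p)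

/-- A space is a strong q-space if every point has a strong q-sequence. -/
def StrongQSpace (X : Type*) [TopologicalSpace X] : Prop :=
  ∀ x : X, ∃ U : ℕ → Set X, IsStrongQSequenceAt x U

/-- A subset `A` is of countable character in `X` if there is a countable family of open
neighbourhoods of `A` such that every open neighbourhood of `A` contains a member of it. -/
def HasCountableCharacter [TopologicalSpace X] (A : Set X) : Prop :=
  ∃ U : ℕ → Set X, (∀ n, IsOpen (U n) ∧ A ⊆ U n) ∧
    ∀ W : Set X, IsOpen W → A ⊆ W → ∃ n, U n ⊆ W

/-- A topological group is ω-balanced if for every neighbourhood `U` of the identity there is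
a countable family `γ` of open neighbourhoods of the identity such that for every `x` some
`V ∈ γ` satisfies `xVx⁻¹ ⊆ U`. -/
def OmegaBalanced (G : Type*) [Group G] [TopologicalSpace G] : Prop :=
  ∀ U : Set G, U ∈ nhds (1 : G) → ∃ γ : Set (Set G), γ.Countable ∧
    (∀ V ∈ γ, IsOpen V ∧ (1 : G) ∈ V) ∧
    ∀ x : G, ∃ V ∈ γ, ∀ v ∈ V, x * v * x⁻¹ ∈ U

/-- A topological group is ω-narrow if for every open neighbourhood `V` of the identity there
is a countable set `A` with `A * V = G`. -/
def OmegaNarrow (G : Type*) [Group G] [TopologicalSpace G] : Prop :=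
  ∀ V : Set G, IsOpen V → (1 : G) ∈ V → ∃ A : Set G, A.Countable ∧ A * V = Set.univ

/-- A topological group is feathered if it has a nonempty compact subset of countable
character. -/
def IsFeathered (G : Type*) [Group G] [TopologicalSpace G] : Prop :=
  ∃ K : Set G, K.Nonempty ∧ IsCompact K ∧ HasCountableCharacter K

/-- A subgroup `H` of a topological group is neutral if for every open neighbourhood `U` of the
identity there is an open neighbourhood `V` of the identity with `HV ⊆ UH`. -/
def IsNeutralSubgroup {G : Type*} [Group G] [TopologicalSpace G] (H : Subgroup G) : Prop :=
  ∀ U : Set G, IsOpen U → (1 : G) ∈ U →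
    ∃ V : Set G, IsOpen V ∧ (1 : G) ∈ V ∧ (H : Set G) * V ⊆ U * (H : Set G)

end Defs

theorem exists_countablyCompact_normal_subgroup (G : Type*) [Group G] [TopologicalSpace G] [IsTopologicalGroup G] [T2Space G]
    (hb : OmegaBalanced G) (hq : QSpace G) :
    ∀ O : Set G, IsOpen O → (1 : G) ∈ O →
      ∃ H : Subgroup G, H.Normal ∧ IsCountablyCompactIn (H : Set G) ∧
        HasCountableCharacter (H : Set G) ∧ (H : Set G) ⊆ O := by
  intro O hOopen hO1
  classical
  obtain ⟨Q, hQmem, hQcl⟩ := hq 1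
  -- choice of symmetric "square roots" of neighborhoods of 1
  have hVex : ∀ U : Set G, ∃ V : Set G, U ∈ 𝓝 (1:G) →
      IsOpen V ∧ (1:G) ∈ V ∧ V * V ⊆ U ∧ V⁻¹ = V := by
    intro U
    by_cases hU : U ∈ 𝓝 (1:G)
    · obtain ⟨V, hVo, hV1, hVV⟩ := exists_open_nhds_one_mul_subset hU
      refine ⟨V ∩ V⁻¹, fun _ => ⟨hVo.inter hVo.inv, ⟨hV1, by simpa using hV1⟩, ?_, ?_⟩⟩
      · exact fun x hx =>
          hVV (Set.mul_subset_mul Set.inter_subset_left Set.inter_subset_left hx)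
      · rw [Set.inter_inv, inv_inv, Set.inter_comm]
    · exact ⟨∅, fun h => absurd h hU⟩
  choose V hVspec using hVex
  -- choice of enumerated balanced families
  have hEex : ∀ U : Set G, ∃ e : ℕ → Set G, U ∈ 𝓝 (1:G) →
      (∀ i, IsOpen (e i) ∧ (1:G) ∈ e i) ∧
      ∀ x : G, ∃ i, ∀ v ∈ e i, x * v * x⁻¹ ∈ U := by
    intro U
    by_cases hU : U ∈ 𝓝 (1:G)
    · obtain ⟨γ, hγc, hγo, hγx⟩ := hb U hU
      have hγne : γ.Nonempty := by
        obtain ⟨Vx, hVx, -⟩ := hγx 1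
        exact ⟨Vx, hVx⟩
      obtain ⟨e, rfl⟩ := hγc.exists_eq_range hγne
      refine ⟨e, fun _ => ⟨fun i => hγo _ ⟨i, rfl⟩, fun x => ?_⟩⟩
      obtain ⟨Vx, ⟨i, rfl⟩, hVx⟩ := hγx x
      exact ⟨i, hVx⟩
    · exact ⟨fun _ => ∅, fun h => absurd h hU⟩
  choose E hEspec using hEex
  -- the recursive construction (with full history, to use course-of-values data)
  obtain ⟨h, hh0, hhsucc⟩ : ∃ h : ℕ → ℕ → Set G,
      (∀ j, h 0 j = O ∩ Q 0) ∧
      (∀ k j, h (k+1) j = if j ≤ k then h k j else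
        V (h k k ∩ E (h k (Nat.unpair k).1) (Nat.unpair k).2 ∩ Q (k+1))) :=
    ⟨fun k => Nat.rec (fun _ => O ∩ Q 0)
      (fun k f j => if j ≤ k then f j else
        V (f k ∩ E (f (Nat.unpair k).1) (Nat.unpair k).2 ∩ Q (k+1))) k,
      fun _ => rfl, fun _ _ => rfl⟩
  set W : ℕ → Set G := fun k => h k k with hWdef
  have hcons : ∀ m j, j ≤ m → h m j = W j := by
    intro m
    induction m with
    | zero => intro j hj; obtain rfl := Nat.le_zero.mp hj; rfl
    | succ m ih =>
      intro j hj
      rcases eq_or_lt_of_le hj with rfl | hlt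
      · rfl
      · have hjm : j ≤ m := Nat.lt_succ_iff.mp hlt
        rw [hhsucc, if_pos hjm, ih j hjm]
  have hW0 : W 0 = O ∩ Q 0 := hh0 0
  have hWsucc : ∀ k, W (k+1) =
      V (W k ∩ E (W (Nat.unpair k).1) (Nat.unpair k).2 ∩ Q (k+1)) := by
    intro k
    have h1 : W (k+1) = h (k+1) (k+1) := rfl
    rw [h1, hhsucc, if_neg (by omega), hcons k k le_rfl,
      hcons k (Nat.unpair k).1 (Nat.unpair_left_le k)]
  -- basic invariant: each W k is an open neighborhood of 1
  have key : ∀ k, IsOpen (W k) ∧ (1:G) ∈ W k := by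
    intro k
    induction k using Nat.strong_induction_on with
    | _ k ih =>
      cases k with
      | zero => rw [hW0]; exact ⟨hOopen.inter (hQmem 0).1, hO1, (hQmem 0).2⟩
      | succ k =>
        have hu := Nat.unpair_left_le k
        have hWu : W (Nat.unpair k).1 ∈ 𝓝 (1:G) :=
          (ih _ (Nat.lt_succ_of_le hu)).1.mem_nhds (ih _ (Nat.lt_succ_of_le hu)).2
        have hWk : W k ∈ 𝓝 (1:G) :=
          (ih k (Nat.lt_succ_self k)).1.mem_nhds (ih k (Nat.lt_succ_self k)).2
        have hE1 := (hEspec _ hWu).1 (Nat.unpair k).2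
        have hS : W k ∩ E (W (Nat.unpair k).1) (Nat.unpair k).2 ∩ Q (k+1) ∈ 𝓝 (1:G) :=
          Filter.inter_mem (Filter.inter_mem hWk (hE1.1.mem_nhds hE1.2))
            ((hQmem (k+1)).1.mem_nhds (hQmem (k+1)).2)
        have hVS := hVspec _ hS
        rw [hWsucc k]
        exact ⟨hVS.1, hVS.2.1⟩
  have hnhds : ∀ k, W k ∈ 𝓝 (1:G) := fun k => (key k).1.mem_nhds (key k).2
  have hSk : ∀ k, W k ∩ E (W (Nat.unpair k).1) (Nat.unpair k).2 ∩ Q (k+1) ∈ 𝓝 (1:G) := by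
    intro k
    have hE1 := (hEspec _ (hnhds (Nat.unpair k).1)).1 (Nat.unpair k).2
    exact Filter.inter_mem (Filter.inter_mem (hnhds k) (hE1.1.mem_nhds hE1.2))
      ((hQmem (k+1)).1.mem_nhds (hQmem (k+1)).2)
  have hmul : ∀ k, W (k+1) * W (k+1) ⊆ W k := by
    intro k
    rw [hWsucc k]
    exact fun x hx => ((hVspec _ (hSk k)).2.2.1 hx).1.1
  have hinv : ∀ k, (W (k+1))⁻¹ = W (k+1) := by
    intro k
    rw [hWsucc k]
    exact (hVspec _ (hSk k)).2.2.2
  have hsubS : ∀ k, W (k+1) ⊆ W k ∩ E (W (Nat.unpair k).1) (Nat.unpair k).2 ∩ Q (k+1) := by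
    intro k x hx
    have h1 : (1:G) ∈ W (k+1) := (key (k+1)).2
    have hx1 : x * 1 ∈ W (k+1) * W (k+1) := Set.mul_mem_mul hx h1
    rw [mul_one, hWsucc k] at hx1
    exact (hVspec _ (hSk k)).2.2.1 hx1
  have hsub : ∀ k, W (k+1) ⊆ W k := fun k x hx => ((hsubS k hx).1).1
  have hanti : ∀ m n, m ≤ n → W n ⊆ W m := fun m n hmn =>
    antitone_nat_of_succ_le hsub hmn
  have hQsub : ∀ k, W k ⊆ Q k := by
    intro k
    cases k with
    | zero => rw [hW0]; exact Set.inter_subset_right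
    | succ k => exact fun x hx => (hsubS k hx).2
  -- closure of W (k+1) is inside W k
  have hclosure : ∀ k, closure (W (k+1)) ⊆ W k := by
    intro k x hx
    have ho : IsOpen (x • W (k+1)) := (key (k+1)).1.smul x
    have hxo : x ∈ x • W (k+1) := ⟨1, (key (k+1)).2, mul_one x⟩
    obtain ⟨y, hy1, hy2⟩ := mem_closure_iff.mp hx _ ho hxo
    obtain ⟨v, hv, hxv⟩ := hy1
    have hyv : y = x * v := by rw [← hxv]; rfl
    have hvinv : v⁻¹ ∈ W (k+1) := by
      rw [← hinv k]; exact Set.inv_mem_inv.mpr hv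
    have hxx : (x * v) * v⁻¹ ∈ W (k+1) * W (k+1) :=
      Set.mul_mem_mul (hyv ▸ hy2) hvinv
    rw [mul_inv_cancel_right] at hxx
    exact hmul k hxx
  -- cluster points of sequences eventually in s lie in the closure of s
  have hclus : ∀ (u : ℕ → G) (p : G), MapClusterPt p atTop u →
      ∀ (s : Set G) (m : ℕ), (∀ n, m ≤ n → u n ∈ s) → p ∈ closure s := by
    intro u p hp s m hs
    rw [mem_closure_iff]
    intro o ho hpo
    have hf : ∃ᶠ n in atTop, u n ∈ o := mapClusterPt_iff_frequently.mp hp o (ho.mem_nhds hpo)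
    obtain ⟨n, hnm, hno⟩ := Filter.frequently_atTop.mp hf m
    exact ⟨u n, hno, hs n hnm⟩
  -- the subgroup
  refine ⟨{ carrier := ⋂ k, W k
            one_mem' := Set.mem_iInter.mpr fun k => (key k).2
            mul_mem' := ?_
            inv_mem' := ?_ }, ?_, ?_, ?_, ?_⟩
  · intro a b ha hb
    refine Set.mem_iInter.mpr fun k => ?_
    exact hmul k (Set.mul_mem_mul (Set.mem_iInter.mp ha (k+1)) (Set.mem_iInter.mp hb (k+1)))
  · intro a ha
    refine Set.mem_iInter.mpr fun k => ?_
    have : a⁻¹ ∈ W (k+1) := by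
      rw [← hinv k]; exact Set.inv_mem_inv.mpr (Set.mem_iInter.mp ha (k+1))
    exact hsub k this
  -- Normality
  · constructor
    intro a ha g
    have ha' : ∀ k, a ∈ W k := Set.mem_iInter.mp ha
    show g * a * g⁻¹ ∈ ⋂ k, W k
    refine Set.mem_iInter.mpr fun k => ?_
    obtain ⟨i, hi⟩ := (hEspec _ (hnhds k)).2 g
    have hm : W (Nat.pair k i + 1) ⊆ E (W k) i := by
      intro x hx
      have h2 := ((hsubS (Nat.pair k i) hx).1).2
      simpa [Nat.unpair_pair] using h2
    exact hi a (hm (ha' (Nat.pair k i + 1)))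
  -- Countable compactness
  · intro Uc hUo hcov
    by_contra hfin
    push_neg at hfin
    have hch : ∀ n : ℕ, ∃ x, x ∈ (⋂ k, W k) ∧ x ∉ ⋃ m ∈ Finset.range (n+1), Uc m := by
      intro n
      obtain ⟨x, hx1, hx2⟩ := Set.not_subset.mp (hfin (Finset.range (n+1)))
      exact ⟨x, hx1, hx2⟩
    choose x hxH hxn using hch
    have hxQ : ∀ n, x n ∈ Q n := fun n => hQsub n (Set.mem_iInter.mp (hxH n) n)
    obtain ⟨p, hp⟩ := hQcl x hxQ
    have hpW : ∀ k, p ∈ W k := fun k =>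
      hclosure k (hclus x p hp (W (k+1)) 0 fun n _ => Set.mem_iInter.mp (hxH n) (k+1))
    have hpH : p ∈ ⋃ m, Uc m := hcov (Set.mem_iInter.mpr hpW)
    obtain ⟨m, hm⟩ := Set.mem_iUnion.mp hpH
    have hf : ∃ᶠ n in atTop, x n ∈ Uc m := mapClusterPt_iff_frequently.mp hp _ ((hUo m).mem_nhds hm)
    obtain ⟨n, hnm, hno⟩ := Filter.frequently_atTop.mp hf m
    exact hxn n (Set.mem_iUnion₂.mpr ⟨m, Finset.mem_range.mpr (by omega), hno⟩)
  -- Countable character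
  · refine ⟨W, fun n => ⟨(key n).1, fun x hx => Set.mem_iInter.mp hx n⟩, ?_⟩
    intro Wset hWo hHW
    by_contra hno
    push_neg at hno
    have hch : ∀ n, ∃ x, x ∈ W n ∧ x ∉ Wset := by
      intro n
      obtain ⟨x, hx1, hx2⟩ := Set.not_subset.mp (hno n)
      exact ⟨x, hx1, hx2⟩
    choose x hxW hxn using hch
    obtain ⟨p, hp⟩ := hQcl x fun n => hQsub n (hxW n)
    have hpW : ∀ k, p ∈ W k := fun k =>
      hclosure k (hclus x p hp (W (k+1)) (k+1) fun n hn => hanti (k+1) n hn (hxW n))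
    have hpWset : p ∈ Wset := hHW (Set.mem_iInter.mpr hpW)
    have hf := mapClusterPt_iff_frequently.mp hp _ (hWo.mem_nhds hpWset)
    obtain ⟨n, -, hno'⟩ := Filter.frequently_atTop.mp hf 0
    exact hxn n hno'
  -- H ⊆ O
  · intro x hx
    have hx0 : x ∈ W 0 := Set.mem_iInter.mp hx 0
    rw [hW0] at hx0
    exact hx0.1
end

section
/- Let G be a Hausdorff topological group and H a closed subgroup of G of countable character in G. Then the quotient space G/H is first-countable. -/
open Filter Topology Set Pointwise TopologicalSpace

universe u

theorem quotient_firstCountable_of_countableCharacter (G : Type*) [Group G] [TopologicalSpace G] [IsTopologicalGroup G] [T2Space G]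
    (H : Subgroup G) (hcl : IsClosed (H : Set G))
    (hch : HasCountableCharacter (H : Set G)) :
    FirstCountableTopology (G ⧸ H) := by
  obtain ⟨U, hU, hbasis⟩ := hch
  have key : (𝓝 (((1 : G) : G ⧸ H))).HasBasis (fun _ : ℕ => True)
      (fun n => QuotientGroup.mk '' U n) := by
    constructor
    intro t
    simp only [true_and]
    constructor
    · intro ht
      obtain ⟨W, hWt, hWopen, hWmem⟩ := mem_nhds_iff.1 ht
      have hHW : (H : Set G) ⊆ QuotientGroup.mk ⁻¹' W := by
        intro h hh
        have : (h : G ⧸ H) = ((1 : G) : G ⧸ H) := by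
          rw [QuotientGroup.eq]; simpa using hh
        simpa [Set.mem_preimage, this] using hWmem
      obtain ⟨n, hn⟩ := hbasis (QuotientGroup.mk ⁻¹' W)
        (hWopen.preimage continuous_quot_mk) hHW
      exact ⟨n, (Set.image_subset_iff.2 hn).trans hWt⟩
    · rintro ⟨n, hn⟩
      refine Filter.mem_of_superset ?_ hn
      exact (QuotientGroup.isOpenMap_coe (U n) (hU n).1).mem_nhds
        ⟨1, (hU n).2 H.one_mem, rfl⟩
  have k1 : (𝓝 (((1 : G) : G ⧸ H))).IsCountablyGenerated :=
    key.isCountablyGenerated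
  refine ⟨fun x => ?_⟩
  induction x using QuotientGroup.induction_on with
  | H g =>
    have hx : (g : G ⧸ H) = Homeomorph.smul g ((1 : G) : G ⧸ H) := by
      show (g : G ⧸ H) = g • (((1 : G) : G ⧸ H))
      rw [MulAction.Quotient.smul_mk, smul_eq_mul, mul_one]
    rw [hx, ← (Homeomorph.smul (α := G ⧸ H) g).map_nhds_eq]
    exact Filter.map.isCountablyGenerated _ _
end

section
/- Let G be a Hausdorff topological group and H a subgroup of G such that for every open set U with H ⊆ U there exists an open symmetric set V (i.e. V = V⁻¹) containing the identity with H ⊆ V and V·V ⊆ U. Then the canonical quotient mapping p : G → G/H is a closed map, and H is a neutral subgroup of G. -/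
open Filter Topology Set Pointwise TopologicalSpace

universe u

theorem closedMap_and_neutral_of_symmetric_base (G : Type*) [Group G] [TopologicalSpace G] [IsTopologicalGroup G] [T2Space G] (H : Subgroup G)
    (h : ∀ U : Set G, IsOpen U → (H : Set G) ⊆ U →
      ∃ V : Set G, IsOpen V ∧ (1 : G) ∈ V ∧ V⁻¹ = V ∧ (H : Set G) ⊆ V ∧ V * V ⊆ U) :
    IsClosedMap (QuotientGroup.mk : G → G ⧸ H) ∧ IsNeutralSubgroup H := by
  constructor
  · intro F hF
    have key : IsClosed (F * (H : Set G)) := by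
      rw [← isOpen_compl_iff, isOpen_iff_mem_nhds]
      intro x hx
      have hU : IsOpen ((x⁻¹ • F)ᶜ) := by
        simp only [isOpen_compl_iff]
        exact hF.smul _
      have hHU : (H : Set G) ⊆ (x⁻¹ • F)ᶜ := by
        intro g hg hgF
        obtain ⟨f, hf, hfg⟩ := hgF
        apply hx
        exact ⟨f, hf, g⁻¹, H.inv_mem hg, by
          have : x⁻¹ * f = g := hfg
          have : f = x * g := by rw [← this]; group
          rw [this]; group⟩
      obtain ⟨V, hVo, hV1, hVs, hHV, hVV⟩ := h _ hU hHU
      have : x • V ⊆ (F * (H : Set G))ᶜ := by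
        intro y hy hyF
        obtain ⟨v, hv, hxy⟩ := hy
        obtain ⟨f, hf, k, hk, hfk⟩ := hyF
        have h1 : x⁻¹ * f = v * k⁻¹ := by
          have hy : x * v = f * k := by simpa using hxy.trans hfk.symm
          have hf2 : f = x * v * k⁻¹ := by rw [hy]; group
          rw [hf2]; group
        have h2 : v * k⁻¹ ∈ V * V := mul_mem_mul hv (hHV (H.inv_mem hk))
        have := hVV h2
        rw [← h1] at this
        exact this ⟨f, hf, rfl⟩
      exact Filter.mem_of_superset ((hVo.smul x).mem_nhds ⟨1, hV1, by simp⟩) this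
    have heq : QuotientGroup.mk ⁻¹' (QuotientGroup.mk '' F : Set (G ⧸ H)) = F * (H : Set G) :=
      QuotientGroup.preimage_image_mk_eq_mul H F
    rw [← (QuotientGroup.isQuotientMap_mk H).isClosed_preimage, heq]
    exact key
  · intro U hUo hU1
    have hopen : IsOpen (U * (H : Set G)) := hUo.mul_right
    have hsub : (H : Set G) ⊆ U * (H : Set G) := fun g hg => ⟨1, hU1, g, hg, one_mul g⟩
    obtain ⟨V, hVo, hV1, hVs, hHV, hVV⟩ := h _ hopen hsub
    exact ⟨V, hVo, hV1, fun y ⟨a, ha, b, hb, hab⟩ => hVV ⟨a, hHV ha, b, hb, hab⟩⟩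
end

section
/- A Hausdorff topological group G is a q-space if and only if there is a closed countably compact subgroup H of G such that the quotient space G/H is metrizable and the canonical quotient mapping p : G → G/H is quasi-perfect. -/
open Filter Topology Set Pointwise TopologicalSpace

universe u

section Helpers

variable {X : Type*} [TopologicalSpace X]

lemma MapClusterPt.mem_closure_of_tail {q : X} {u : ℕ → X} (h : MapClusterPt q atTop u)
    {s : Set X} {m : ℕ} (hs : ∀ n ≥ m, u n ∈ s) : q ∈ closure s := by
  rw [mem_closure_iff_nhds]
  intro t ht
  obtain ⟨n, hn1, hn2⟩ := ((mapClusterPt_iff_frequently.mp h t ht).and_eventually (eventually_ge_atTop m)).exists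
  exact ⟨u n, hn1, hs n hn2⟩

lemma IsCountablyCompactIn.exists_mapClusterPt {s : Set X} (hs : IsCountablyCompactIn s)
    (u : ℕ → X) (hu : ∀ n, u n ∈ s) : ∃ q ∈ s, MapClusterPt q atTop u := by
  by_contra h
  push_neg at h
  have key : ∀ q ∈ s, ∃ k : ℕ, q ∉ closure (u '' Ici k) := by
    intro q hq
    have hq' := h q hq
    rw [mapClusterPt_iff_frequently] at hq'
    push_neg at hq'
    obtain ⟨t, ht, hfin⟩ := hq'
    obtain ⟨k, hk⟩ := eventually_atTop.mp hfin
    refine ⟨k, ?_⟩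
    rw [mem_closure_iff_nhds]
    push_neg
    refine ⟨t, ht, ?_⟩
    rw [Set.eq_empty_iff_forall_notMem]
    rintro y ⟨hyt, n, hn, rfl⟩
    exact hk n hn hyt
  obtain ⟨t, hts⟩ := hs (fun k => (closure (u '' Ici k))ᶜ)
    (fun k => isClosed_closure.isOpen_compl)
    (fun q hq => by
      obtain ⟨k, hk⟩ := key q hq
      exact Set.mem_iUnion.mpr ⟨k, hk⟩)
  have h0 : u (t.sup id) ∈ s := hu _
  obtain ⟨k, hkt, hk⟩ := Set.mem_iUnion₂.mp (hts h0)
  exact hk (subset_closure ⟨t.sup id, Finset.le_sup (f := id) hkt, rfl⟩)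

lemma isCountablyCompactIn_of_clusterPt {s : Set X}
    (h : ∀ u : ℕ → X, (∀ n, u n ∈ s) → ∃ q ∈ s, MapClusterPt q atTop u) :
    IsCountablyCompactIn s := by
  intro U hUo hUc
  by_contra hfin
  push_neg at hfin
  have hsel : ∀ k : ℕ, ∃ x, x ∈ s ∧ x ∉ ⋃ n ∈ Finset.range (k + 1), U n := by
    intro k
    obtain ⟨x, hx, hx2⟩ := Set.not_subset.mp (hfin (Finset.range (k + 1)))
    exact ⟨x, hx, hx2⟩
  choose x hxs hxU using hsel
  obtain ⟨q, hq, hcl⟩ := h x hxs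
  obtain ⟨m, hm⟩ := Set.mem_iUnion.mp (hUc hq)
  obtain ⟨k, h1, h2⟩ := ((mapClusterPt_iff_frequently.mp hcl (U m) ((hUo m).mem_nhds hm)).and_eventually
    (eventually_ge_atTop m)).exists
  exact hxU k (Set.mem_biUnion (Finset.mem_range.mpr (Nat.lt_succ_of_le h2)) h1)

end Helpers

section GroupHelpers

variable {G : Type*} [Group G] [TopologicalSpace G] [IsTopologicalGroup G]

lemma exists_cube_nhds {U : Set G} (hU : U ∈ 𝓝 (1 : G)) :
    ∃ W : Set G, IsOpen W ∧ (1 : G) ∈ W ∧ W⁻¹ = W ∧ W * W * W ⊆ U := by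
  obtain ⟨V1, hV1o, hV11, hV1s⟩ := exists_open_nhds_one_mul_subset hU
  obtain ⟨V2, hV2o, hV21, hV2s⟩ :=
    exists_open_nhds_one_mul_subset (hV1o.mem_nhds hV11)
  set W : Set G := (V1 ∩ V2) ∩ (V1 ∩ V2)⁻¹ with hW
  have hWsub1 : W ⊆ V1 := fun a ha => ha.1.1
  have hWsub2 : W ⊆ V2 := fun a ha => ha.1.2
  refine ⟨W, ((hV1o.inter hV2o).inter (hV1o.inter hV2o).inv), ⟨⟨hV11, hV21⟩, by simp [hV11, hV21]⟩, ?_, ?_⟩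
  · rw [hW, Set.inter_inv, inv_inv, Set.inter_comm]
  · intro a ha
    obtain ⟨b, hb, c, hc, rfl⟩ := ha
    obtain ⟨d, hd, e, he, rfl⟩ := hb
    have hde : d * e ∈ V1 := hV2s (Set.mul_mem_mul (hWsub2 hd) (hWsub2 he))
    exact hV1s (Set.mul_mem_mul hde (hWsub1 hc))

lemma MapClusterPt.mul_left {q : G} {u : ℕ → G} (h : MapClusterPt q atTop u) (x : G) :
    MapClusterPt (x * q) atTop (fun n => x * u n) := by
  rw [mapClusterPt_iff_frequently] at h ⊢
  intro s hs
  have hpre : (fun g => x * g) ⁻¹' s ∈ 𝓝 q :=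
    (continuous_mul_left x).continuousAt.preimage_mem_nhds hs
  exact (h _ hpre).mono fun n hn => hn

end GroupHelpers

theorem qSpace_iff_quotient (G : Type*) [Group G] [TopologicalSpace G] [IsTopologicalGroup G] [T2Space G] :
    QSpace G ↔
      ∃ H : Subgroup G, IsClosed (H : Set G) ∧ IsCountablyCompactIn (H : Set G) ∧
        MetrizableSpace (G ⧸ H) ∧
        IsClosedMap (QuotientGroup.mk : G → G ⧸ H) ∧
          (∀ y : G ⧸ H, IsCountablyCompactIn ((QuotientGroup.mk : G → G ⧸ H) ⁻¹' {y})) := by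
  constructor
  · intro hq
    obtain ⟨U, hUP, hUc⟩ := hq 1
    have hUn : ∀ n, U n ∈ 𝓝 (1 : G) := fun n => (hUP n).1.mem_nhds (hUP n).2
    have key : ∀ S : Set G, ∃ W : Set G,
        (S ∈ 𝓝 (1:G) → (IsOpen W ∧ (1:G) ∈ W ∧ W⁻¹ = W ∧ W * W * W ⊆ S)) ∧ W ∈ 𝓝 (1:G) := by
      intro S
      by_cases hS : S ∈ 𝓝 (1:G)
      · obtain ⟨W, h1, h2, h3, h4⟩ := exists_cube_nhds hS
        exact ⟨W, fun _ => ⟨h1, h2, h3, h4⟩, h1.mem_nhds h2⟩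
      · exact ⟨Set.univ, fun h => absurd h hS, Filter.univ_mem⟩
    choose f hf hfn using key
    set V : ℕ → Set G := fun n => Nat.rec (f (U 0)) (fun n Vn => f (Vn ∩ U (n+1))) n with hVdef
    have hVnhds : ∀ n, V n ∈ 𝓝 (1:G) := by
      intro n
      cases n with
      | zero => exact hfn _
      | succ n => exact hfn _
    have h0 := hf (U 0) (hUn 0)
    have hsucc := fun n => hf (V n ∩ U (n+1)) (Filter.inter_mem (hVnhds n) (hUn (n+1)))
    have hVo : ∀ n, IsOpen (V n) := by
      intro n
      cases n with
      | zero => exact h0.1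
      | succ n => exact (hsucc n).1
    have hV1 : ∀ n, (1:G) ∈ V n := by
      intro n
      cases n with
      | zero => exact h0.2.1
      | succ n => exact (hsucc n).2.1
    have hVsymm : ∀ n, (V n)⁻¹ = V n := by
      intro n
      cases n with
      | zero => exact h0.2.2.1
      | succ n => exact (hsucc n).2.2.1
    have cube_self : ∀ {s : Set G}, (1:G) ∈ s → s ⊆ s * s * s := by
      intro s h1 a ha
      have : a * 1 * 1 ∈ s * s * s := Set.mul_mem_mul (Set.mul_mem_mul ha h1) h1
      simpa using this
    have hV3 : ∀ n, V (n+1) * V (n+1) * V (n+1) ⊆ V n :=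
      fun n a ha => ((hsucc n).2.2.2 ha).1
    have hVU : ∀ n, V n ⊆ U n := by
      intro n
      cases n with
      | zero => exact fun a ha => h0.2.2.2 (cube_self h0.2.1 ha)
      | succ n => exact fun a ha => ((hsucc n).2.2.2 (cube_self (hsucc n).2.1 ha)).2
    have hmul2 : ∀ n, ∀ a ∈ V (n+1), ∀ b ∈ V (n+1), a * b ∈ V n := by
      intro n a ha b hb
      have : a * b * 1 ∈ V (n+1) * V (n+1) * V (n+1) :=
        Set.mul_mem_mul (Set.mul_mem_mul ha hb) (hV1 (n+1))
      simpa using hV3 n this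
    have hVdec : ∀ n, V (n+1) ⊆ V n := fun n a ha => by
      simpa using hmul2 n a ha 1 (hV1 (n+1))
    have hVadd : ∀ n k, V (n + k) ⊆ V n := by
      intro n k
      induction k with
      | zero => exact subset_rfl
      | succ k ih => exact (hVdec (n+k)).trans ih
    have hVle : ∀ {n m : ℕ}, n ≤ m → V m ⊆ V n := by
      intro n m h
      have := hVadd n (m - n)
      rwa [Nat.add_sub_cancel' h] at this
    have hVinv : ∀ n, ∀ a ∈ V n, a⁻¹ ∈ V n := fun n a ha => by
      rw [← hVsymm n]
      exact Set.inv_mem_inv.mpr ha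
    have hclosure : ∀ n, closure (V (n+1)) ⊆ V n := by
      intro n z hz
      have hnb : (fun g => z * g) '' V (n+1) ∈ 𝓝 z :=
        IsOpen.mem_nhds (isOpenMap_mul_left z _ (hVo (n+1))) ⟨1, hV1 (n+1), mul_one z⟩
      obtain ⟨y, hyt, hyV⟩ := mem_closure_iff_nhds.mp hz _ hnb
      obtain ⟨v, hv, rfl⟩ := hyt
      have := hmul2 n _ hyV _ (hVinv (n+1) _ hv)
      simpa using this
    set Hc : Set G := ⋂ n, V n with hHcdef
    have hHcV : ∀ n, Hc ⊆ V n := fun n => Set.iInter_subset _ n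
    have hHc1 : (1:G) ∈ Hc := Set.mem_iInter.mpr fun n => hV1 n
    have hHcInv : ∀ {a : G}, a ∈ Hc → a⁻¹ ∈ Hc := fun {a} ha =>
      Set.mem_iInter.mpr fun n => hVinv n a (Set.mem_iInter.mp ha n)
    have hHcMul : ∀ {a b : G}, a ∈ Hc → b ∈ Hc → a * b ∈ Hc := fun {a b} ha hb =>
      Set.mem_iInter.mpr fun n =>
        hmul2 n a (Set.mem_iInter.mp ha (n+1)) b (Set.mem_iInter.mp hb (n+1))
    have hHcEq : Hc = ⋂ n, closure (V n) := by
      apply Set.Subset.antisymm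
      · exact Set.subset_iInter fun n => (hHcV n).trans subset_closure
      · intro z hz
        exact Set.mem_iInter.mpr fun n => hclosure n (Set.mem_iInter.mp hz (n+1))
    have hHcClosed : IsClosed Hc := by
      rw [hHcEq]
      exact isClosed_iInter fun n => isClosed_closure
    have clusterA : ∀ u : ℕ → G, (∀ n, u n ∈ V n) → ∃ q, q ∈ Hc ∧ MapClusterPt q atTop u := by
      intro u hu
      obtain ⟨q, hq⟩ := hUc u (fun n => hVU n (hu n))
      refine ⟨q, ?_, hq⟩
      rw [hHcEq]
      exact Set.mem_iInter.mpr fun m =>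
        hq.mem_closure_of_tail fun n hn => hVle hn (hu n)
    have baseB : ∀ W : Set G, IsOpen W → Hc ⊆ W → ∃ n, V n ⊆ W := by
      intro W hWo hWsub
      by_contra hW
      push_neg at hW
      have hsel : ∀ n, ∃ a, a ∈ V n ∧ a ∉ W := by
        intro n
        obtain ⟨a, ha, ha2⟩ := Set.not_subset.mp (hW n)
        exact ⟨a, ha, ha2⟩
      choose a haV haW using hsel
      obtain ⟨q, hqH, hqc⟩ := clusterA a haV
      have hqW : q ∈ closure Wᶜ := hqc.mem_closure_of_tail (m := 0) fun n _ => haW n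
      rw [(hWo.isClosed_compl).closure_eq] at hqW
      exact hqW (hWsub hqH)
    let H : Subgroup G :=
      { carrier := Hc
        one_mem' := hHc1
        mul_mem' := fun ha hb => hHcMul ha hb
        inv_mem' := fun ha => hHcInv ha }
    have mkeq : ∀ (x h : G), h ∈ Hc → (QuotientGroup.mk (x*h) : G ⧸ H) = QuotientGroup.mk x := by
      intro x h hh
      apply QuotientGroup.eq.mpr
      have hxh : (x*h)⁻¹ * x = h⁻¹ := by group
      rw [hxh]
      exact hHcInv hh
    have mkmem : ∀ {a b : G}, (QuotientGroup.mk a : G ⧸ H) = QuotientGroup.mk b → a⁻¹ * b ∈ Hc :=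
      fun {a b} h => QuotientGroup.eq.mp h
    refine ⟨H, hHcClosed, ?_, ?_, ?_, ?_⟩
    · -- countably compact
      apply isCountablyCompactIn_of_clusterPt
      intro u hu
      obtain ⟨q, hqH, hqc⟩ := clusterA u (fun n => hHcV n (hu n))
      exact ⟨q, hqH, hqc⟩
    · -- metrizable
      have hT1 : T1Space (G ⧸ H) := by
        refine ⟨fun a => ?_⟩
        obtain ⟨x, rfl⟩ := QuotientGroup.mk_surjective a
        rw [← (QuotientGroup.isQuotientMap_mk H).isClosed_preimage]
        have hpre : (QuotientGroup.mk : G → G ⧸ H) ⁻¹' {QuotientGroup.mk x} =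
            (fun g => x * g) '' Hc := by
          ext g
          simp only [Set.mem_preimage, Set.mem_singleton_iff, Set.mem_image]
          constructor
          · intro hg
            exact ⟨x⁻¹ * g, mkmem hg.symm, by group⟩
          · rintro ⟨h, hh, rfl⟩
            exact mkeq x h hh
        rw [hpre]
        exact (Homeomorph.mulLeft x).isClosedMap _ hHcClosed
      set E : ℕ → Set ((G ⧸ H) × (G ⧸ H)) := fun n =>
        {p | ∃ a b v h : G, QuotientGroup.mk a = p.1 ∧ QuotientGroup.mk b = p.2 ∧
          v ∈ V n ∧ h ∈ Hc ∧ a⁻¹ * b = v * h} with hE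
      have hErefl : ∀ n (p : G ⧸ H), (p, p) ∈ E n := by
        intro n p
        obtain ⟨a, rfl⟩ := QuotientGroup.mk_surjective p
        exact ⟨a, a, 1, 1, rfl, rfl, hV1 n, hHc1, by group⟩
      have hEanti : ∀ {n m : ℕ}, n ≤ m → E m ⊆ E n := by
        rintro n m hnm p ⟨a, b, v, h, h1, h2, h3, h4, h5⟩
        exact ⟨a, b, v, h, h1, h2, hVle hnm h3, h4, h5⟩
      have hEsymm : ∀ n (p : (G ⧸ H) × (G ⧸ H)), p ∈ E (n+1) → (p.2, p.1) ∈ E n := by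
        rintro n p ⟨a, b, v, h, h1, h2, h3, h4, h5⟩
        refine ⟨b, a, h⁻¹ * v⁻¹, 1, h2, h1, ?_, hHc1, ?_⟩
        · exact hmul2 n _ (hVinv (n+1) _ (hHcV (n+1) h4)) _ (hVinv (n+1) _ h3)
        · have hba : b⁻¹ * a = (a⁻¹ * b)⁻¹ := by group
          rw [hba, h5]
          group
      have hEcomp : ∀ n (p : (G ⧸ H) × (G ⧸ H)),
          p ∈ SetRel.comp (E (n+2)) (E (n+2)) → p ∈ E n := by
        rintro n ⟨A, C⟩ ⟨B, ⟨a, b, v1, h1, ha, hb, hv1, hh1, he1⟩,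
          ⟨b', c, v2, h2, hb', hc, hv2, hh2, he2⟩⟩
        have hbb : b⁻¹ * b' ∈ Hc := mkmem (hb.trans hb'.symm)
        refine ⟨a, c, v1 * ((h1 * (b⁻¹ * b')) * v2), h2, ha, hc, ?_, hh2, ?_⟩
        · apply hmul2 n _ (hVle (Nat.le_succ (n+1)) hv1)
          exact hmul2 (n+1) _ (hHcV (n+2) (hHcMul hh1 hbb)) _ hv2
        · have hac : a⁻¹ * c = (a⁻¹ * b) * (b⁻¹ * b') * (b'⁻¹ * c) := by group
          rw [hac, he1, he2]
          group
      set F : Filter ((G ⧸ H) × (G ⧸ H)) := ⨅ n, 𝓟 (E n) with hFdef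
      have hFb : F.HasBasis (fun _ : ℕ => True) E := hasBasis_iInf_principal
        (fun m n => ⟨max m n, hEanti (le_max_left m n), hEanti (le_max_right m n)⟩)
      have hFmem : ∀ {t : Set ((G ⧸ H) × (G ⧸ H))}, t ∈ F ↔ ∃ n, E n ⊆ t := by
        intro t
        rw [hFb.mem_iff]
        simp
      set core : UniformSpace.Core (G ⧸ H) := UniformSpace.Core.mk' F
        (fun r hr x => by
          obtain ⟨n, hn⟩ := hFmem.mp hr
          exact hn (hErefl n x))
        (fun r hr => by
          obtain ⟨n, hn⟩ := hFmem.mp hr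
          exact hFmem.mpr ⟨n+1, fun p hp => hn (hEsymm n p hp)⟩)
        (fun r hr => by
          obtain ⟨n, hn⟩ := hFmem.mp hr
          exact ⟨E (n+2), hFmem.mpr ⟨n+2, subset_rfl⟩, fun p hp => hn (hEcomp n p hp)⟩)
        with hcore
      set U0 : UniformSpace (G ⧸ H) := UniformSpace.ofCore core with hU0
      have hopen_iff : ∀ s : Set (G ⧸ H), IsOpen s ↔ @IsOpen _ U0.toTopologicalSpace s := by
        intro s
        rw [@isOpen_iff_ball_subset _ U0 s, ← (QuotientGroup.isQuotientMap_mk H).isOpen_preimage]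
        constructor
        · intro hP b hb
          obtain ⟨x, rfl⟩ := QuotientGroup.mk_surjective b
          have hP'o : IsOpen ((fun g => x * g) ⁻¹' ((QuotientGroup.mk : G → G ⧸ H) ⁻¹' s)) :=
            hP.preimage (continuous_mul_left x)
          have hHsub : Hc ⊆ (fun g => x * g) ⁻¹' ((QuotientGroup.mk : G → G ⧸ H) ⁻¹' s) := by
            intro h hh
            show QuotientGroup.mk (x * h) ∈ s
            rw [mkeq x h hh]
            exact hb
          obtain ⟨k, hk⟩ := baseB _ hP'o hHsub
          refine ⟨E (k+2), hFmem.mpr ⟨k+2, subset_rfl⟩, ?_⟩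
          rintro c ⟨a', c', v, h, ha', hc', hv, hh, he⟩
          have hh0 : x⁻¹ * a' ∈ Hc := mkmem ha'.symm
          have hxc : x⁻¹ * c' ∈ V k := by
            have hce : x⁻¹ * c' = ((x⁻¹ * a') * v) * h := by
              have : x⁻¹ * c' = (x⁻¹ * a') * (a'⁻¹ * c') := by group
              rw [this, he]
              group
            rw [hce]
            exact hmul2 k _ (hmul2 (k+1) _ (hHcV (k+2) hh0) _ hv) _ (hHcV (k+1) hh)
          have := hk hxc
          have hcs : QuotientGroup.mk c' ∈ s := by
            have h2 : QuotientGroup.mk (x * (x⁻¹ * c')) ∈ s := this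
            rwa [mul_inv_cancel_left] at h2
          rwa [hc'] at hcs
        · intro hball
          rw [isOpen_iff_mem_nhds]
          intro g hg
          obtain ⟨W, hW, hWb⟩ := hball (QuotientGroup.mk g) hg
          obtain ⟨n, hn⟩ := hFmem.mp hW
          refine Filter.mem_of_superset
            (IsOpen.mem_nhds (isOpenMap_mul_left g _ (hVo n)) ⟨1, hV1 n, mul_one g⟩) ?_
          rintro y ⟨v, hv, rfl⟩
          have hmem : (QuotientGroup.mk g, QuotientGroup.mk (g * v)) ∈ E n :=
            ⟨g, g * v, v, 1, rfl, rfl, hv, hHc1, by group⟩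
          exact hWb (hn hmem)
      have htopeq : (inferInstance : TopologicalSpace (G ⧸ H)) = core.toTopologicalSpace := by
        refine TopologicalSpace.ext_iff.mpr fun s => ?_
        exact hopen_iff s
      letI Ufin : UniformSpace (G ⧸ H) := UniformSpace.ofCoreEq core _ htopeq
      haveI hcg : Filter.IsCountablyGenerated (@uniformity _ Ufin) := by
        have huf : @uniformity _ Ufin = F := rfl
        rw [huf]
        exact hFb.isCountablyGenerated
      haveI := hT1
      exact UniformSpace.metrizableSpace
    · -- closed map
      intro F hF
      rw [← (QuotientGroup.isQuotientMap_mk H).isClosed_preimage,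
        QuotientGroup.preimage_image_mk_eq_mul]
      apply isClosed_of_closure_subset
      intro z hz
      have hsel2 : ∀ n : ℕ, ∃ fn hn vn : G,
          fn ∈ F ∧ hn ∈ Hc ∧ vn ∈ V (n+1) ∧ fn * hn = z * vn := by
        intro n
        have hnb : (fun g => z * g) '' V (n+1) ∈ 𝓝 z :=
          IsOpen.mem_nhds (isOpenMap_mul_left z _ (hVo (n+1))) ⟨1, hV1 (n+1), mul_one z⟩
        obtain ⟨g, hg1, hg2⟩ := mem_closure_iff_nhds.mp hz _ hnb
        obtain ⟨vn, hvn, hveq⟩ := hg1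
        obtain ⟨fn, hfn, hn, hhn, heq⟩ := hg2
        exact ⟨fn, hn, vn, hfn, hhn, hvn, heq.trans hveq.symm⟩
      choose fs hs vs hfF hhH hvV heq using hsel2
      set w : ℕ → G := fun n => z⁻¹ * fs n with hw
      have hwV : ∀ n, w n ∈ V n := by
        intro n
        have h1 : z⁻¹ * fs n = vs n * (hs n)⁻¹ := by
          have h0 := heq n
          have h2 : fs n = z * vs n * (hs n)⁻¹ := by rw [← h0]; group
          rw [h2]; group
        show z⁻¹ * fs n ∈ V n
        rw [h1]
        exact hmul2 n _ (hvV n) _ (hVinv (n+1) _ (hHcV (n+1) (hhH n)))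
      obtain ⟨q, hqH, hqc⟩ := clusterA w hwV
      have hfs : (fun n => z * w n) = fs := by
        funext n
        simp [hw, mul_inv_cancel_left]
      have hfc : MapClusterPt (z * q) atTop fs := hfs ▸ hqc.mul_left z
      have hzqF : z * q ∈ F := by
        have hmem := hfc.mem_closure_of_tail (m := 0) fun n _ => hfF n
        rwa [hF.closure_eq] at hmem
      have hzeq : z = (z * q) * q⁻¹ := by group
      rw [hzeq]
      exact Set.mul_mem_mul hzqF (hHcInv hqH)
    · -- fibers
      intro y
      obtain ⟨x, rfl⟩ := QuotientGroup.mk_surjective y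
      apply isCountablyCompactIn_of_clusterPt
      intro u hu
      have hux : ∀ n, x⁻¹ * u n ∈ Hc := by
        intro n
        have h1 : (QuotientGroup.mk (u n) : G ⧸ H) = QuotientGroup.mk x := hu n
        exact mkmem h1.symm
      obtain ⟨q, hqH, hqc⟩ := clusterA (fun n => x⁻¹ * u n) (fun n => hHcV n (hux n))
      refine ⟨x * q, ?_, ?_⟩
      · exact Set.mem_preimage.mpr (Set.mem_singleton_iff.mpr (mkeq x q hqH))
      · have hm := hqc.mul_left x
        have hfs : (fun n => x * (x⁻¹ * u n)) = u := by
          funext n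
          simp [mul_inv_cancel_left]
        exact hfs ▸ hm
  · rintro ⟨H, hHcl, hHcc, hHmet, hHmap, hHfib⟩
    intro x
    haveI := hHmet
    obtain ⟨B, hB⟩ := (𝓝 (QuotientGroup.mk x : G ⧸ H)).exists_antitone_basis
    have hBnhds : ∀ n, B n ∈ 𝓝 (QuotientGroup.mk x : G ⧸ H) := fun n =>
      hB.toHasBasis.mem_of_mem trivial
    have hBmem : ∀ n, (QuotientGroup.mk : G → G ⧸ H) ⁻¹' (B n) ∈ 𝓝 x := fun n =>
      (QuotientGroup.continuous_mk).continuousAt.preimage_mem_nhds (hBnhds n)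
    refine ⟨fun n => interior ((QuotientGroup.mk : G → G ⧸ H) ⁻¹' (B n)),
      fun n => ⟨isOpen_interior, mem_interior_iff_mem_nhds.mpr (hBmem n)⟩, ?_⟩
    intro u hu
    by_contra hcl
    push_neg at hcl
    have humem : ∀ n, QuotientGroup.mk (u n) ∈ B n := fun n =>
      interior_subset (s := (QuotientGroup.mk : G → G ⧸ H) ⁻¹' (B n)) (hu n)
    have tails_closed : ∀ k, IsClosed (u '' Ici k) := by
      intro k
      apply isClosed_of_closure_subset
      intro z hz
      by_contra hzT
      refine hcl z ?_
      rw [mapClusterPt_iff_frequently]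
      intro s hs
      rw [frequently_atTop]
      intro m
      have hfin : ((u '' Ico k m)).Finite := (Set.finite_Ico k m).image u
      have hzopen : (u '' Ico k m)ᶜ ∈ 𝓝 z := by
        apply hfin.isClosed.isOpen_compl.mem_nhds
        intro hmem
        exact hzT (Set.image_mono Set.Ico_subset_Ici_self hmem)
      obtain ⟨y, hys, hyim⟩ := mem_closure_iff_nhds.mp hz _ (inter_mem hs hzopen)
      obtain ⟨n, hn, rfl⟩ := hyim
      refine ⟨n, ?_, hys.1⟩
      by_contra hnm
      push_neg at hnm
      exact hys.2 ⟨n, ⟨hn, hnm⟩, rfl⟩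
    have hconv : Tendsto (fun n => (QuotientGroup.mk (u n) : G ⧸ H)) atTop
        (𝓝 (QuotientGroup.mk x)) := by
      rw [hB.toHasBasis.tendsto_right_iff]
      intro i _
      filter_upwards [eventually_ge_atTop i] with n hn
      exact hB.antitone hn (humem n)
    have hfib : ∀ k : ℕ, ∃ n, n ≥ k ∧ QuotientGroup.mk (u n) = (QuotientGroup.mk x : G ⧸ H) := by
      intro k
      have hclIm : IsClosed ((QuotientGroup.mk : G → G ⧸ H) '' (u '' Ici k)) :=
        hHmap _ (tails_closed k)
      have hmem : (QuotientGroup.mk x : G ⧸ H) ∈ (QuotientGroup.mk : G → G ⧸ H) '' (u '' Ici k) := by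
        rw [← hclIm.closure_eq]
        rw [mem_closure_iff_nhds]
        intro t ht
        obtain ⟨n, hn1, hn2⟩ := ((hconv.eventually_mem ht).and (eventually_ge_atTop k)).exists
        exact ⟨QuotientGroup.mk (u n), hn1, Set.mem_image_of_mem _ ⟨n, hn2, rfl⟩⟩
      obtain ⟨g, ⟨n, hn, rfl⟩, hg⟩ := hmem
      exact ⟨n, hn, hg⟩
    choose ψ hψge hψeq using hfib
    set φ : ℕ → ℕ := fun j => Nat.rec (ψ 0) (fun _ p => ψ (p + 1)) j with hφ
    have hφfib : ∀ j, QuotientGroup.mk (u (φ j)) = (QuotientGroup.mk x : G ⧸ H) := by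
      intro j
      cases j with
      | zero => exact hψeq 0
      | succ j => exact hψeq (φ j + 1)
    have hφge : ∀ j, j ≤ φ j := by
      intro j
      induction j with
      | zero => exact Nat.zero_le _
      | succ j ih => exact le_trans (Nat.succ_le_succ ih) (hψge (φ j + 1))
    have hφtend : Tendsto φ atTop atTop := tendsto_atTop_mono hφge tendsto_id
    obtain ⟨q, hq, hqc⟩ := (hHfib (QuotientGroup.mk x)).exists_mapClusterPt (fun j => u (φ j))
      (fun j => by simpa [Set.mem_preimage] using hφfib j)
    refine hcl q ?_
    show ClusterPt q (Filter.map u atTop)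
    refine ClusterPt.mono hqc ?_
    calc Filter.map (fun j => u (φ j)) atTop = Filter.map u (Filter.map φ atTop) := by
          rw [Filter.map_map]; rfl
      _ ≤ Filter.map u atTop := Filter.map_mono hφtend
end

section
/- A Hausdorff topological group G is a strict q-space if and only if for each open neighborhood U of the identity in G there is a closed sequentially compact subgroup H ⊆ U such that the quotient space G/H is metrizable and the canonical quotient mapping p : G → G/H is sequential-perfect. -/
open Filter Topology Set Pointwise TopologicalSpace

universe u

section Aux
set_option linter.unusedSectionVars false

lemma seqClusterAux {X Y : Type*} [TopologicalSpace X] [TopologicalSpace Y] [T1Space X]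
    {f : X → Y} (hc : IsClosedMap f) {y : Y} (hf : IsSeqCompact (f ⁻¹' {y})) {u : ℕ → X}
    (hu : Tendsto (f ∘ u) atTop (𝓝 y)) : ∃ p : X, MapClusterPt p atTop u := by
  by_contra h
  push_neg at h
  have key : ∀ c : X, ∃ O : Set X, IsOpen O ∧ c ∈ O ∧ ∃ k : ℕ, ∀ m ≥ k, u m ∉ O := by
    intro c
    have hnc := h c
    rw [mapClusterPt_iff_frequently] at hnc
    push_neg at hnc
    obtain ⟨s, hs, hev⟩ := hnc
    obtain ⟨O, hOs, hOo, hcO⟩ := mem_nhds_iff.1 hs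
    rw [eventually_atTop] at hev
    obtain ⟨k, hk⟩ := hev
    exact ⟨O, hOo, hcO, k, fun m hm hmem => hk m hm (hOs hmem)⟩
  have hT : ∀ n : ℕ, IsClosed (u '' Ici n) := by
    intro n
    rw [← closure_subset_iff_isClosed]
    intro c hc'
    obtain ⟨O, hOo, hcO, k, hk⟩ := key c
    have hsplit : u '' Ici n ⊆ (u '' (Ico n (max n k))) ∪ (u '' Ici (max n k)) := by
      rintro _ ⟨m, hm, rfl⟩
      rcases lt_or_ge m (max n k) with h1 | h1
      · exact Or.inl ⟨m, ⟨hm, h1⟩, rfl⟩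
      · exact Or.inr ⟨m, h1, rfl⟩
    have hcc := closure_mono hsplit hc'
    rw [closure_union] at hcc
    rcases hcc with h1 | h1
    · have hfin : (u '' (Ico n (max n k))).Finite := (finite_Ico _ _).image _
      rw [hfin.isClosed.closure_eq] at h1
      obtain ⟨m, hm, rfl⟩ := h1
      exact ⟨m, hm.1, rfl⟩
    · exfalso
      have hsub : u '' Ici (max n k) ⊆ Oᶜ := by
        rintro _ ⟨m, hm, rfl⟩
        exact hk m (le_trans (le_max_right n k) hm)
      have hcc2 := closure_mono hsub h1
      rw [(hOo.isClosed_compl).closure_eq] at hcc2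
      exact hcc2 hcO
  have hfib : ∀ n : ℕ, ∃ m, n ≤ m ∧ u m ∈ f ⁻¹' {y} := by
    intro n
    have hcl : IsClosed (f '' (u '' Ici n)) := hc _ (hT n)
    have hy : y ∈ f '' (u '' Ici n) := by
      rw [← hcl.closure_eq, mem_closure_iff_nhds]
      intro t ht
      have h1 : ∀ᶠ k in atTop, (f ∘ u) k ∈ t := hu ht
      obtain ⟨m, hmt, hmn⟩ := (h1.and (eventually_ge_atTop n)).exists
      exact ⟨f (u m), hmt, ⟨u m, ⟨m, hmn, rfl⟩, rfl⟩⟩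
    obtain ⟨x, ⟨m, hm, rfl⟩, hfx⟩ := hy
    exact ⟨m, hm, hfx⟩
  choose m hm hfm using hfib
  obtain ⟨p, _, φ, hφ, htend⟩ := hf (fun n => hfm n)
  refine h p (mapClusterPt_iff_frequently.2 fun s hs => frequently_atTop.2 fun K => ?_)
  obtain ⟨J, hJ⟩ := eventually_atTop.1 (htend hs)
  refine ⟨m (φ (max J K)), le_trans (le_trans (le_max_right J K) (hφ.le_apply)) (hm _), hJ _ (le_max_left J K)⟩

variable {G : Type*} [Group G] [TopologicalSpace G] [IsTopologicalGroup G]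


lemma satAux (H : Subgroup G) (F : Set G) :
    (QuotientGroup.mk : G → G ⧸ H) ⁻¹' ((QuotientGroup.mk : G → G ⧸ H) '' F) = F * (H : Set G) := by
  ext a
  simp only [mem_preimage, mem_image, Set.mem_mul]
  constructor
  · rintro ⟨f, hf, hmk⟩
    have : f⁻¹ * a ∈ H := (QuotientGroup.eq).1 hmk
    exact ⟨f, hf, f⁻¹ * a, this, by group⟩
  · rintro ⟨f, hf, h, hh, rfl⟩
    exact ⟨f, hf, (QuotientGroup.eq).2 (by simpa using hh)⟩

lemma fiberAux (H : Subgroup G) (a : G) :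
    (QuotientGroup.mk : G → G ⧸ H) ⁻¹' {(QuotientGroup.mk a : G ⧸ H)} = a • (H : Set G) := by
  ext g
  simp only [mem_preimage, mem_singleton_iff, mem_smul_set]
  constructor
  · intro hg
    have : a⁻¹ * g ∈ H := (QuotientGroup.eq).1 hg.symm
    exact ⟨a⁻¹ * g, this, by rw [smul_eq_mul]; group⟩
  · rintro ⟨h, hh, rfl⟩
    exact ((QuotientGroup.eq).2 (by simpa using hh)).symm

lemma closedMapAux (V : ℕ → Set G) (hone : ∀ n, (1:G) ∈ V n)
    (hsq : ∀ n, V (n+1) * V (n+1) ⊆ V n) (H : Subgroup G)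
    (hHV : ∀ n, (H : Set G) ⊆ V n)
    (hbase : ∀ O : Set G, IsOpen O → (H : Set G) ⊆ O → ∃ n, V n ⊆ O)
    (hVo : ∀ n, IsOpen (V n)) :
    IsClosedMap (QuotientGroup.mk : G → G ⧸ H) := by
  intro F hF
  rw [← (QuotientGroup.isQuotientMap_mk H).isClosed_preimage, satAux]
  rw [← isOpen_compl_iff]
  rw [isOpen_iff_mem_nhds]
  intro a ha
  have hHO : (H : Set G) ⊆ (fun g => a * g) ⁻¹' Fᶜ := by
    intro h hh
    simp only [mem_preimage, mem_compl_iff]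
    intro hcon
    exact ha ⟨a * h, hcon, h⁻¹, H.inv_mem hh, by group⟩
  obtain ⟨n, hn⟩ := hbase _ ((hF.isOpen_compl).preimage (continuous_mul_left a)) hHO
  have hsub : a • V (n+1) ⊆ (F * (H : Set G))ᶜ := by
    rintro _ ⟨v, hv, rfl⟩
    simp only [mem_compl_iff, Set.mem_mul, smul_eq_mul]
    rintro ⟨f, hf, h, hh, hEq⟩
    have hvh : v * h⁻¹ ∈ V n := hsq n (mul_mem_mul hv (hHV (n+1) (H.inv_mem hh)))
    have heqf : a * (v * h⁻¹) = f := by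
      have h2 : f * h = a * v := by simpa [smul_eq_mul] using hEq
      calc a * (v * h⁻¹) = (a * v) * h⁻¹ := by group
        _ = (f * h) * h⁻¹ := by rw [h2]
        _ = f := by group
    have hfc : f ∈ Fᶜ := by
      have := hn hvh
      simp only [mem_preimage, mem_compl_iff] at this
      rwa [heqf] at this
    exact hfc hf
  exact mem_of_superset (((hVo (n+1)).smul a).mem_nhds ⟨1, hone (n+1), by simp⟩) hsub

lemma fiberSeqCompactAux (H : Subgroup G) (hH : IsSeqCompact (H : Set G)) (y : G ⧸ H) :
    IsSeqCompact ((QuotientGroup.mk : G → G ⧸ H) ⁻¹' {y}) := by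
  obtain ⟨a, rfl⟩ := QuotientGroup.mk_surjective y
  rw [fiberAux]
  intro u hu
  have hu' : ∀ n, a⁻¹ * u n ∈ (H : Set G) := by
    intro n
    obtain ⟨h, hh, hEq⟩ := hu n
    simp only [smul_eq_mul] at hEq
    rw [← hEq]; simpa using hh
  obtain ⟨h, hhH, φ, hφ, htend⟩ := hH hu'
  refine ⟨a * h, ⟨h, hhH, rfl⟩, φ, hφ, ?_⟩
  have := ((continuous_mul_left a).tendsto h).comp htend
  simpa [Function.comp_def, ← mul_assoc] using this


lemma metrizableAux (V : ℕ → Set G) (hVo : ∀ n, IsOpen (V n)) (hone : ∀ n, (1:G) ∈ V n)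
    (hsymm : ∀ n, (V n)⁻¹ = V n) (hsq : ∀ n, V (n+1) * V (n+1) ⊆ V n)
    (H : Subgroup G) (hHV : ∀ n, (H : Set G) ⊆ V n)
    (hbase : ∀ O : Set G, IsOpen O → (H : Set G) ⊆ O → ∃ n, V n ⊆ O)
    (hHc : IsClosed (H : Set G)) :
    TopologicalSpace.MetrizableSpace (G ⧸ H) := by
  have hmono : ∀ n, V (n+1) ⊆ V n := by
    intro n v hv
    have := hsq n (mul_mem_mul hv (hone (n+1)))
    rwa [mul_one] at this
  set D : ℕ → Set ((G ⧸ H) × (G ⧸ H)) := fun n =>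
    {z | ∃ a b : G, QuotientGroup.mk a = z.1 ∧ QuotientGroup.mk b = z.2 ∧ a⁻¹ * b ∈ V n}
    with hD
  have Dmono : Antitone D := by
    refine antitone_nat_of_succ_le fun n z hz => ?_
    obtain ⟨a, b, h1, h2, hv⟩ := hz
    exact ⟨a, b, h1, h2, hmono n hv⟩
  have Dsymm : ∀ n, ∀ z ∈ D n, Prod.swap z ∈ D n := by
    rintro n z ⟨a, b, h1, h2, hv⟩
    refine ⟨b, a, h2, h1, ?_⟩
    rw [← hsymm n, Set.mem_inv]
    simpa using hv
  -- change of representative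
  have Dball : ∀ n (a : G) (z : (G ⧸ H) × (G ⧸ H)), z ∈ D (n+1) → z.1 = QuotientGroup.mk a →
      ∃ b : G, QuotientGroup.mk b = z.2 ∧ a⁻¹ * b ∈ V n := by
    rintro n a z ⟨a', b, h1, h2, hv⟩ hz1
    refine ⟨b, h2, ?_⟩
    have hmem : a⁻¹ * a' ∈ H := QuotientGroup.eq.1 (hz1 ▸ h1).symm
    have : (a⁻¹ * a') * (a'⁻¹ * b) ∈ V n :=
      hsq n (mul_mem_mul (hHV (n+1) hmem) hv)
    simpa [mul_assoc] using this
  have Dcomp : ∀ n, SetRel.comp (D (n+2)) (D (n+2)) ⊆ D n := by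
    rintro n ⟨x, z⟩ ⟨y, hxy, hyz⟩
    obtain ⟨a, b, h1, h2, hv⟩ := hxy
    obtain ⟨c, hc2, hcv⟩ := Dball (n+1) b (y, z) hyz h2.symm
    refine ⟨a, c, h1, hc2, ?_⟩
    have : (a⁻¹ * b) * (b⁻¹ * c) ∈ V n :=
      hsq n (mul_mem_mul (hmono (n+1) hv) hcv)
    simpa [mul_assoc] using this
  set U : Filter ((G ⧸ H) × (G ⧸ H)) := ⨅ n, 𝓟 (D n) with hU
  have hdir : Directed (· ≥ ·) D := fun m n =>
    ⟨max m n, Dmono (le_max_left m n), Dmono (le_max_right m n)⟩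
  have hUb : U.HasBasis (fun _ => True) D := hasBasis_iInf_principal hdir
  have memD : ∀ n, D n ∈ U := fun n => hUb.mem_of_mem trivial
  set core : UniformSpace.Core (G ⧸ H) :=
    { uniformity := U
      refl := by
        refine le_iInf fun n => principal_mono.2 ?_
        rintro ⟨x, y⟩ hxy
        obtain ⟨a, rfl⟩ := QuotientGroup.mk_surjective x
        have hxy' : (QuotientGroup.mk a : G ⧸ H) = y := hxy
        exact ⟨a, a, rfl, hxy', by simpa using hone n⟩
      symm := by
        rw [hUb.tendsto_right_iff]
        intro n _
        filter_upwards [memD n] with z hz using Dsymm n z hz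
      comp := le_iInf fun n => le_principal_iff.2
        (mem_of_superset (mem_lift' (memD (n+2))) (Dcomp n)) } with hcore
  have htopeq : (inferInstance : TopologicalSpace (G ⧸ H)) = core.toTopologicalSpace := by
    refine TopologicalSpace.ext_nhds fun x => ?_
    rw [UniformSpace.Core.nhds_toTopologicalSpace]
    obtain ⟨a, rfl⟩ := QuotientGroup.mk_surjective x
    refine le_antisymm ?_ ?_
    · refine (hUb.comap (Prod.mk (QuotientGroup.mk a))).ge_iff.2 fun n _ => ?_
      have hopen : IsOpen ((QuotientGroup.mk : G → G ⧸ H) '' (a • V n)) :=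
        QuotientGroup.isOpenMap_coe _ ((hVo n).smul a)
      have hmem : (QuotientGroup.mk a : G ⧸ H) ∈ (QuotientGroup.mk : G → G ⧸ H) '' (a • V n) :=
        ⟨a, ⟨1, hone n, mul_one a⟩, rfl⟩
      refine mem_of_superset (hopen.mem_nhds hmem) ?_
      rintro _ ⟨_, ⟨v, hv, rfl⟩, rfl⟩
      exact ⟨a, a • v, rfl, rfl, by simpa [smul_eq_mul, mul_assoc] using hv⟩
    · intro s hs
      obtain ⟨t, hts, hto, hxt⟩ := mem_nhds_iff.1 hs
      have hHO : (H : Set G) ⊆ (fun g => a * g) ⁻¹' ((QuotientGroup.mk : G → G ⧸ H) ⁻¹' t) := by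
        intro h hh
        have hmk : (QuotientGroup.mk (a * h) : G ⧸ H) = QuotientGroup.mk a :=
          (QuotientGroup.eq.2 (by simpa using hh)).symm
        simp only [mem_preimage]
        rw [hmk]
        exact hxt
      obtain ⟨n, hn⟩ := hbase _ ((hto.preimage continuous_quotient_mk').preimage
        (continuous_mul_left a)) hHO
      refine (hUb.comap (Prod.mk (QuotientGroup.mk a))).mem_iff.2 ⟨n+1, trivial, ?_⟩
      intro y hy
      obtain ⟨b, hb2, hbv⟩ := Dball n a (QuotientGroup.mk a, y) hy rfl
      have : a * (a⁻¹ * b) ∈ (QuotientGroup.mk : G → G ⧸ H) ⁻¹' t := hn hbv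
      rw [show a * (a⁻¹ * b) = b by group] at this
      have hb2' : QuotientGroup.mk b = y := hb2
      rw [← hb2']
      exact hts this
  letI u : UniformSpace (G ⧸ H) := UniformSpace.ofCoreEq core _ htopeq
  haveI : (uniformity (G ⧸ H)).IsCountablyGenerated := hUb.isCountablyGenerated
  haveI : T1Space (G ⧸ H) := by
    refine ⟨fun x => ?_⟩
    obtain ⟨a, rfl⟩ := QuotientGroup.mk_surjective x
    rw [← (QuotientGroup.isQuotientMap_mk H).isClosed_preimage]
    have : (QuotientGroup.mk : G → G ⧸ H) ⁻¹' {(QuotientGroup.mk a : G ⧸ H)} = a • (H : Set G) := by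
      ext g
      simp only [mem_preimage, mem_singleton_iff, mem_smul_set]
      constructor
      · intro hg
        exact ⟨a⁻¹ * g, QuotientGroup.eq.1 hg.symm, by rw [smul_eq_mul]; group⟩
      · rintro ⟨h, hh, rfl⟩
        exact (QuotientGroup.eq.2 (by simpa using hh)).symm
    rw [this]
    exact hHc.smul a
  exact UniformSpace.metrizableSpace

end Aux

theorem strictQSpace_iff_quotient (G : Type*) [Group G] [TopologicalSpace G] [IsTopologicalGroup G] [T2Space G] :
    StrictQSpace G ↔
      ∀ U : Set G, IsOpen U → (1 : G) ∈ U →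
        ∃ H : Subgroup G, IsClosed (H : Set G) ∧ IsSeqCompact (H : Set G) ∧
          (H : Set G) ⊆ U ∧ MetrizableSpace (G ⧸ H) ∧
          IsClosedMap (QuotientGroup.mk : G → G ⧸ H) ∧
          (∀ y : G ⧸ H, IsSeqCompact ((QuotientGroup.mk : G → G ⧸ H) ⁻¹' {y})) := by
  constructor
  · -- forward direction
    intro hG U hUo hU1
    obtain ⟨Us, ⟨hUsprop, hUscluster⟩, hUssc⟩ := hG 1
    have key : ∀ W : Set G, IsOpen W → (1:G) ∈ W →
        ∃ V' : Set G, IsOpen V' ∧ (1:G) ∈ V' ∧ V'⁻¹ = V' ∧ V' * V' ⊆ W := by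
      intro W hWo hW1
      obtain ⟨V0, hV0o, hV01, hV0m⟩ := exists_open_nhds_one_mul_subset (hWo.mem_nhds hW1)
      refine ⟨V0 ∩ V0⁻¹, hV0o.inter hV0o.inv, ⟨hV01, by simpa using hV01⟩, ?_, ?_⟩
      · simp [Set.inter_comm]
      · exact subset_trans (Set.mul_subset_mul inter_subset_left inter_subset_left) hV0m
    have hex : ∀ W : Set G, ∃ V' : Set G, (IsOpen W ∧ (1:G) ∈ W) →
        (IsOpen V' ∧ (1:G) ∈ V' ∧ V'⁻¹ = V' ∧ V' * V' ⊆ W) := by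
      intro W
      by_cases h : IsOpen W ∧ (1:G) ∈ W
      · obtain ⟨V', hV'⟩ := key W h.1 h.2
        exact ⟨V', fun _ => hV'⟩
      · exact ⟨∅, fun hc => absurd hc h⟩
    choose f hf using hex
    set V : ℕ → Set G := fun n =>
      Nat.rec (f (U ∩ Us 0)) (fun n Vn => f (Vn ∩ Us (n+1))) n with hVdef
    have h0 : IsOpen (U ∩ Us 0) ∧ (1:G) ∈ U ∩ Us 0 :=
      ⟨hUo.inter (hUsprop 0).1, hU1, (hUsprop 0).2⟩
    have hspec0 := hf _ h0
    have hopenmem : ∀ n, IsOpen (V n) ∧ (1:G) ∈ V n := by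
      intro n
      induction n with
      | zero => exact ⟨hspec0.1, hspec0.2.1⟩
      | succ n ih =>
        have h' := hf (V n ∩ Us (n+1))
          ⟨ih.1.inter (hUsprop (n+1)).1, ih.2, (hUsprop (n+1)).2⟩
        exact ⟨h'.1, h'.2.1⟩
    have hspecS : ∀ n, (V (n+1))⁻¹ = V (n+1) ∧ V (n+1) * V (n+1) ⊆ V n ∩ Us (n+1) := by
      intro n
      have h' := hf (V n ∩ Us (n+1))
        ⟨(hopenmem n).1.inter (hUsprop (n+1)).1, (hopenmem n).2, (hUsprop (n+1)).2⟩
      exact ⟨h'.2.2.1, h'.2.2.2⟩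
    have hVo : ∀ n, IsOpen (V n) := fun n => (hopenmem n).1
    have hone : ∀ n, (1:G) ∈ V n := fun n => (hopenmem n).2
    have hsymm : ∀ n, (V n)⁻¹ = V n := by
      intro n
      cases n with
      | zero => exact hspec0.2.2.1
      | succ n => exact (hspecS n).1
    have hsq : ∀ n, V (n+1) * V (n+1) ⊆ V n :=
      fun n => subset_trans (hspecS n).2 inter_subset_left
    have hself : ∀ n, V n ⊆ V n * V n := by
      intro n x hx
      have := Set.mul_mem_mul hx (hone n)
      rwa [mul_one] at this
    have hsub : ∀ n, V n ⊆ Us n := by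
      intro n
      cases n with
      | zero => exact subset_trans (hself 0) (subset_trans hspec0.2.2.2
          (subset_trans inter_subset_right subset_rfl))
      | succ n => exact subset_trans (hself (n+1)) (subset_trans (hspecS n).2 inter_subset_right)
    have hV0U : V 0 ⊆ U := subset_trans (hself 0) (subset_trans hspec0.2.2.2 inter_subset_left)
    have hmono : ∀ n, V (n+1) ⊆ V n := fun n => subset_trans (hself (n+1)) (hsq n)
    have hVant : Antitone V := antitone_nat_of_succ_le hmono
    set H : Subgroup G :=
      { carrier := ⋂ n, V n
        one_mem' := mem_iInter.2 hone
        mul_mem' := fun ha hb => mem_iInter.2 fun n =>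
          hsq n (Set.mul_mem_mul (mem_iInter.1 ha (n+1)) (mem_iInter.1 hb (n+1)))
        inv_mem' := fun ha => mem_iInter.2 fun n => by
          rw [← hsymm n]
          exact Set.inv_mem_inv.2 (mem_iInter.1 ha n) } with hHdef
    have hHV : ∀ n, (H : Set G) ⊆ V n := fun n x hx => mem_iInter.1 hx n
    have hHclosureEq : (H : Set G) = ⋂ n, closure (V n) := by
      apply Set.Subset.antisymm
      · exact fun x hx => mem_iInter.2 fun n => subset_closure (hHV n hx)
      · intro x hx
        refine mem_iInter.2 fun n => ?_
        have hxc : x ∈ closure (V (n+1)) := mem_iInter.1 hx (n+1)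
        obtain ⟨z, hzO, hzV⟩ := mem_closure_iff.1 hxc (x • V (n+1)) ((hVo (n+1)).smul x)
          ⟨1, hone (n+1), mul_one x⟩
        obtain ⟨v, hv, hEq⟩ := hzO
        have hxeq : x = z * v⁻¹ := by rw [← hEq]; simp [smul_eq_mul]
        have hv' : v⁻¹ ∈ V (n+1) := by
          rw [← hsymm (n+1)]
          exact Set.inv_mem_inv.2 hv
        rw [hxeq]
        exact hsq n (Set.mul_mem_mul hzV hv')
    have hHc : IsClosed (H : Set G) := by
      rw [hHclosureEq]
      exact isClosed_iInter fun n => isClosed_closure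
    have hbase : ∀ O : Set G, IsOpen O → (H : Set G) ⊆ O → ∃ n, V n ⊆ O := by
      intro O hOo hHO
      by_contra hcon
      push_neg at hcon
      have hcon' : ∀ n, ∃ g, g ∈ V n ∧ g ∉ O := fun n => Set.not_subset.1 (hcon n)
      choose g hgV hgO using hcon'
      obtain ⟨c, hc⟩ := hUscluster g fun n => hsub n (hgV n)
      have hc' : ClusterPt c (Filter.map g Filter.atTop) := hc
      have hcV : ∀ n, c ∈ closure (V n) := by
        intro n
        refine mem_closure_iff_clusterPt.2 (hc'.mono (le_principal_iff.2 ?_))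
        refine Filter.eventually_atTop.2 ⟨n, fun m hm => hVant hm (hgV m)⟩
      have hcH : c ∈ (H : Set G) := by
        rw [hHclosureEq]; exact mem_iInter.2 hcV
      have hcO : c ∈ Oᶜ := by
        have : c ∈ closure Oᶜ :=
          mem_closure_iff_clusterPt.2 (hc'.mono (le_principal_iff.2
            (Filter.mem_map.2 (Filter.Eventually.of_forall fun m => hgO m))))
        rwa [hOo.isClosed_compl.closure_eq] at this
      exact hcO (hHO hcH)
    have hHseq : IsSeqCompact (H : Set G) := by
      intro u hu
      have hu' : ∀ n, u n ∈ ⋂ m, Us m :=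
        fun n => mem_iInter.2 fun m => hsub m (hHV m (hu n))
      obtain ⟨p, _, φ, hφ, ht⟩ := hUssc hu'
      refine ⟨p, ?_, φ, hφ, ht⟩
      exact hHc.mem_of_tendsto ht (Filter.Eventually.of_forall fun j => hu (φ j))
    refine ⟨H, hHc, hHseq, fun g hg => hV0U (hHV 0 hg), ?_, ?_, ?_⟩
    · exact metrizableAux V hVo hone hsymm hsq H hHV hbase hHc
    · exact closedMapAux V hone hsq H hHV hbase hVo
    · exact fiberSeqCompactAux H hHseq
  · -- backward direction
    intro hyp x
    obtain ⟨H, hHc, hHsc, -, hmetr, hclosedmap, hfibers⟩ := hyp univ isOpen_univ (mem_univ 1)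
    haveI := hmetr
    set y : G ⧸ H := QuotientGroup.mk x with hy
    obtain ⟨s, hs⟩ := (nhds y).exists_antitone_basis
    have hsy : ∀ n, y ∈ interior (s n) :=
      fun n => mem_interior_iff_mem_nhds.2 (hs.1.mem_of_mem trivial)
    refine ⟨fun n => (QuotientGroup.mk : G → G ⧸ H) ⁻¹' interior (s n), ⟨?_, ?_⟩, ?_⟩
    · exact fun n => ⟨isOpen_interior.preimage continuous_quotient_mk', hsy n⟩
    · intro u hu
      have htend : Filter.Tendsto (QuotientGroup.mk ∘ u) Filter.atTop (nhds y) := by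
        refine hs.1.tendsto_right_iff.2 fun n _ => ?_
        refine Filter.eventually_atTop.2 ⟨n, fun m hm => ?_⟩
        exact hs.2 hm (interior_subset (hu m))
      exact seqClusterAux hclosedmap (hfibers y) htend
    · have hInter : (⋂ n, (QuotientGroup.mk : G → G ⧸ H) ⁻¹' interior (s n)) =
          (QuotientGroup.mk : G → G ⧸ H) ⁻¹' {y} := by
        apply Set.Subset.antisymm
        · intro g hg
          simp only [mem_preimage, mem_singleton_iff]
          by_contra hne
          obtain ⟨n, -, hn⟩ := hs.1.mem_iff.1 (compl_singleton_mem_nhds (Ne.symm hne))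
          exact (hn (interior_subset (mem_iInter.1 hg n))) rfl
        · intro g hg
          simp only [mem_preimage, mem_singleton_iff] at hg
          exact mem_iInter.2 fun n => by
            simp only [mem_preimage, hg]
            exact hsy n
      rw [hInter]
      exact hfibers y
end

section
/- A Hausdorff topological group G is a strong q-space if and only if for each open neighborhood U of the identity in G there is a closed sequentially compact subgroup H of countable character in G, whose countable neighborhood base is a strong q-sequence at each point x ∈ H, such that the quotient space G/H is metrizable and the canonical quotient mapping p : G → G/H is strongly sequential-perfect. -/
open Filter Topology Set Pointwise TopologicalSpace

universe u

section MyAux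
set_option linter.unusedSectionVars false
variable {G : Type*} [Group G] [TopologicalSpace G] [IsTopologicalGroup G]


lemma my_subset_cube {S : Set G} (h1 : (1:G) ∈ S) : S ⊆ S * S * S := by
  intro a ha
  have : (1 : G) * 1 * a ∈ S * S * S := mul_mem_mul (mul_mem_mul h1 h1) ha
  simpa using this

lemma my_exists_symm_cube {O : Set G} (hO : IsOpen O) (h1 : (1:G) ∈ O) :
    ∃ S : Set G, IsOpen S ∧ (1:G) ∈ S ∧ (∀ g ∈ S, g⁻¹ ∈ S) ∧ S * S * S ⊆ O := by
  obtain ⟨V, hVo, hV1, hVV⟩ := exists_open_nhds_one_mul_subset (hO.mem_nhds h1)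
  obtain ⟨V', hV'o, hV'1, hV'V'⟩ := exists_open_nhds_one_mul_subset (hVo.mem_nhds hV1)
  have hsub : V' ⊆ V := fun v hv => by
    have : v * 1 ∈ V := hV'V' (mul_mem_mul hv hV'1)
    simpa using this
  refine ⟨V' ∩ V'⁻¹, hV'o.inter hV'o.inv, ⟨hV'1, by simpa using hV'1⟩,
    fun g hg => ⟨hg.2, by simpa using hg.1⟩, ?_⟩
  intro a ha
  obtain ⟨b, hb, c, hc, rfl⟩ := ha
  obtain ⟨d, hd, e, he, rfl⟩ := hb
  exact hVV (mul_mem_mul (hV'V' (mul_mem_mul hd.1 he.1)) (hsub hc.1))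

lemma my_exists_chain (Us : ℕ → Set G) (hUs : ∀ n, IsOpen (Us n) ∧ (1:G) ∈ Us n) :
    ∃ W : ℕ → Set G, (∀ n, IsOpen (W n)) ∧ (∀ n, (1:G) ∈ W n) ∧
      (∀ n, ∀ g ∈ W n, g⁻¹ ∈ W n) ∧ (∀ n, W n ⊆ Us n) ∧
      (∀ n, W (n+1) * W (n+1) * W (n+1) ⊆ W n) := by
  have key : ∀ O : Set G, ∃ S : Set G, IsOpen S ∧ (1:G) ∈ S ∧ (∀ g ∈ S, g⁻¹ ∈ S) ∧
      (IsOpen O → (1:G) ∈ O → S * S * S ⊆ O) := by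
    intro O
    by_cases h : IsOpen O ∧ (1:G) ∈ O
    · obtain ⟨S, h1, h2, h3, h4⟩ := my_exists_symm_cube h.1 h.2
      exact ⟨S, h1, h2, h3, fun _ _ => h4⟩
    · exact ⟨univ, isOpen_univ, mem_univ _, fun g _ => mem_univ _,
        fun hO h1 => absurd ⟨hO, h1⟩ h⟩
  choose S hSo hS1 hSsym hScube using key
  set W : ℕ → Set G := fun n => Nat.rec (S (Us 0)) (fun n Wn => S (Wn ∩ Us (n+1))) n with hW
  have hWo : ∀ n, IsOpen (W n) := by
    intro n; cases n with
    | zero => exact hSo _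
    | succ n => exact hSo _
  have hW1 : ∀ n, (1:G) ∈ W n := by
    intro n; cases n with
    | zero => exact hS1 _
    | succ n => exact hS1 _
  have hWsym : ∀ n, ∀ g ∈ W n, g⁻¹ ∈ W n := by
    intro n; cases n with
    | zero => exact hSsym _
    | succ n => exact hSsym _
  have hcube : ∀ n, W (n+1) * W (n+1) * W (n+1) ⊆ W n ∩ Us (n+1) := by
    intro n
    exact hScube _ ((hWo n).inter (hUs (n+1)).1) ⟨hW1 n, (hUs (n+1)).2⟩
  refine ⟨W, hWo, hW1, hWsym, ?_, fun n => (hcube n).trans inter_subset_left⟩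
  intro n; cases n with
  | zero => exact (my_subset_cube (hS1 _)).trans (hScube _ (hUs 0).1 (hUs 0).2)
  | succ n => exact (my_subset_cube (hW1 (n+1))).trans ((hcube n).trans inter_subset_right)



lemma my_quotient_metrizable (H : Subgroup G) (W : ℕ → Set G)
    (hWo : ∀ n, IsOpen (W n)) (hH : ∀ n, (H : Set G) ⊆ W n)
    (hsym : ∀ n, ∀ g ∈ W n, g⁻¹ ∈ W n)
    (hmul : ∀ n, W (n+1) * W (n+1) ⊆ W n)
    (hanti : Antitone W)
    (hchar : ∀ O : Set G, IsOpen O → (H : Set G) ⊆ O → ∃ n, W n ⊆ O)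
    (hHcl : IsClosed (H : Set G)) :
    MetrizableSpace (G ⧸ H) := by
  have hW1 : ∀ n, (1:G) ∈ W n := fun n => hH n H.one_mem
  set D : ℕ → Set ((G ⧸ H) × (G ⧸ H)) := fun n =>
    {q | ∃ x y : G, QuotientGroup.mk x = q.1 ∧ QuotientGroup.mk y = q.2 ∧ x⁻¹ * y ∈ W n}
    with hD
  have hrefl : ∀ n (q : G ⧸ H), (q, q) ∈ D n := by
    intro n q
    obtain ⟨x, rfl⟩ := QuotientGroup.mk_surjective q
    exact ⟨x, x, rfl, rfl, by simpa using hW1 n⟩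
  have hDsymm : ∀ n (q : (G ⧸ H) × (G ⧸ H)), q ∈ D n → q.swap ∈ D n := by
    rintro n ⟨a, b⟩ ⟨x, y, hx, hy, hxy⟩
    exact ⟨y, x, hy, hx, by simpa using hsym n _ hxy⟩
  have hDanti : Antitone D := by
    apply antitone_nat_of_succ_le
    rintro n ⟨a, b⟩ ⟨x, y, hx, hy, hxy⟩
    exact ⟨x, y, hx, hy, hanti (Nat.le_succ n) hxy⟩
  have hcomp : ∀ n, SetRel.comp (D (n+2)) (D (n+2)) ⊆ D n := by
    rintro n ⟨a, c⟩ ⟨b, ⟨x, y, hx, hy, hxy⟩, ⟨y', z, hy', hz, hy'z⟩⟩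
    refine ⟨x, z, hx, hz, ?_⟩
    have hyb : (QuotientGroup.mk y : G ⧸ H) = b := hy
    have hy'b : (QuotientGroup.mk y' : G ⧸ H) = b := hy'
    have hyy' : y⁻¹ * y' ∈ (H : Set G) := QuotientGroup.eq.mp (hyb.trans hy'b.symm)
    have h1 : (x⁻¹ * y) * (y⁻¹ * y') ∈ W (n+1) :=
      hmul (n+1) (mul_mem_mul hxy (hH (n+2) hyy'))
    have h2 : ((x⁻¹ * y) * (y⁻¹ * y')) * (y'⁻¹ * z) ∈ W n :=
      hmul n (mul_mem_mul h1 (hanti (Nat.le_succ (n+1)) hy'z))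
    have : (x⁻¹ * y) * (y⁻¹ * y') * (y'⁻¹ * z) = x⁻¹ * z := by group
    rwa [this] at h2
  set F : Filter ((G ⧸ H) × (G ⧸ H)) := ⨅ n, 𝓟 (D n) with hF
  have hdir : Directed (fun x1 x2 => x1 ≥ x2) D := fun m n =>
    ⟨max m n, hDanti (le_max_left m n), hDanti (le_max_right m n)⟩
  have hbasis : F.HasBasis (fun _ => True) D := hasBasis_iInf_principal hdir
  have hDF : ∀ n, D n ∈ F := fun n => hbasis.mem_of_mem trivial
  set core : UniformSpace.Core (G ⧸ H) := UniformSpace.Core.mk' F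
    (by
      intro r hr x
      obtain ⟨n, -, hn⟩ := hbasis.mem_iff.mp hr
      exact hn (hrefl n x))
    (by
      intro r hr
      obtain ⟨n, -, hn⟩ := hbasis.mem_iff.mp hr
      exact mem_of_superset (hDF n) fun q hq => hn (hDsymm n q hq))
    (by
      intro r hr
      obtain ⟨n, -, hn⟩ := hbasis.mem_iff.mp hr
      exact ⟨D (n+2), hDF (n+2), (hcomp n).trans hn⟩)
    with hcore
  -- topology equality
  have hqm := QuotientGroup.isQuotientMap_mk H
  have htopeq : (instTopologicalSpaceQuotient : TopologicalSpace (G ⧸ H))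
      = core.toTopologicalSpace := by
    apply TopologicalSpace.ext_iff.mpr
    intro s
    have hcore_open : IsOpen[core.toTopologicalSpace] s ↔
        ∀ a ∈ s, ∃ n, {b | (a, b) ∈ D n} ⊆ s := by
      constructor
      · intro h a ha
        have hmem : s ∈ Filter.comap (Prod.mk a) F := h a ha
        obtain ⟨n, -, hn⟩ := (hbasis.comap (Prod.mk a)).mem_iff.mp hmem
        exact ⟨n, hn⟩
      · intro h a ha
        obtain ⟨n, hn⟩ := h a ha
        exact (hbasis.comap (Prod.mk a)).mem_iff.mpr ⟨n, trivial, hn⟩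
    rw [hcore_open]
    constructor
    · intro hs a ha
      obtain ⟨x, rfl⟩ := QuotientGroup.mk_surjective a
      have hO : IsOpen ((fun g => x * g) ⁻¹' (QuotientGroup.mk ⁻¹' s)) :=
        ((hqm.isOpen_preimage.mpr hs).preimage (continuous_mul_left x))
      have hHO : (H : Set G) ⊆ (fun g => x * g) ⁻¹' (QuotientGroup.mk ⁻¹' s) := by
        intro h hh
        have : QuotientGroup.mk (x * h) = QuotientGroup.mk x :=
          (QuotientGroup.eq).mpr (by simpa using H.inv_mem hh)
        simpa [this] using ha
      obtain ⟨n, hn⟩ := hchar _ hO hHO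
      refine ⟨n + 1, ?_⟩
      rintro b ⟨x', y, hx', hy, hx'y⟩
      have hx'x : (QuotientGroup.mk x' : G ⧸ H) = QuotientGroup.mk x := hx'
      have hyb : (QuotientGroup.mk y : G ⧸ H) = b := hy
      have hxx' : x⁻¹ * x' ∈ (H : Set G) := QuotientGroup.eq.mp hx'x.symm
      have : x⁻¹ * y ∈ W n := by
        have h2 : (x⁻¹ * x') * (x'⁻¹ * y) ∈ W n :=
          hmul n (mul_mem_mul (hH (n+1) hxx') hx'y)
        have heq : (x⁻¹ * x') * (x'⁻¹ * y) = x⁻¹ * y := by group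
        rwa [heq] at h2
      have h3 := hn this
      simp only [mem_preimage] at h3
      rw [← hyb]
      have heq2 : x * (x⁻¹ * y) = y := by group
      rwa [heq2] at h3
    · intro hs
      rw [← hqm.isOpen_preimage]
      rw [isOpen_iff_forall_mem_open]
      intro x hx
      obtain ⟨n, hn⟩ := hs (QuotientGroup.mk x) hx
      refine ⟨(fun g => x * g) '' W n, ?_, ?_, ⟨1, hW1 n, by simp⟩⟩
      · rintro g ⟨w, hw, rfl⟩
        have : (QuotientGroup.mk x, (QuotientGroup.mk (x * w) : G ⧸ H)) ∈ D n :=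
          ⟨x, x * w, rfl, rfl, by simpa using hw⟩
        exact hn this
      · exact (Homeomorph.mulLeft x).isOpenMap _ (hWo n)
  letI u : UniformSpace (G ⧸ H) := UniformSpace.ofCoreEq core _ htopeq
  haveI : (uniformity (G ⧸ H)).IsCountablyGenerated := by
    have : uniformity (G ⧸ H) = F := rfl
    rw [this]
    exact hbasis.isCountablyGenerated
  haveI : T1Space (G ⧸ H) := by
    constructor
    intro q
    obtain ⟨x, rfl⟩ := QuotientGroup.mk_surjective q
    rw [← hqm.isClosed_preimage]
    have : QuotientGroup.mk ⁻¹' {(QuotientGroup.mk x : G ⧸ H)} = x • (H : Set G) := by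
      ext g
      simp only [mem_preimage, mem_singleton_iff, mem_smul_set]
      constructor
      · intro h
        refine ⟨x⁻¹ * g, ?_, by simp [smul_eq_mul]⟩
        have := (QuotientGroup.eq).mp h
        simpa using H.inv_mem this
      · rintro ⟨h, hh, rfl⟩
        exact (QuotientGroup.eq).mpr (by simpa using H.inv_mem hh)
    rw [this]
    exact hHcl.smul x
  exact UniformSpace.metrizableSpace

end MyAux

theorem strongQSpace_iff_quotient (G : Type*) [Group G] [TopologicalSpace G] [IsTopologicalGroup G] [T2Space G] :
    StrongQSpace G ↔
      ∀ U : Set G, IsOpen U → (1 : G) ∈ U →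
        ∃ (H : Subgroup G) (V : ℕ → Set G), IsClosed (H : Set G) ∧
          IsSeqCompact (H : Set G) ∧
          (∀ n, IsOpen (V n) ∧ (H : Set G) ⊆ V n) ∧
          (∀ W : Set G, IsOpen W → (H : Set G) ⊆ W → ∃ n, V n ⊆ W) ∧
          (∀ x ∈ (H : Set G), IsStrongQSequenceAt x V) ∧
          MetrizableSpace (G ⧸ H) ∧
          IsClosedMap (QuotientGroup.mk : G → G ⧸ H) ∧
          (∀ F : Set (G ⧸ H), IsSeqCompact F →
            IsSeqCompact ((QuotientGroup.mk : G → G ⧸ H) ⁻¹' F)) := by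
  constructor
  · -- forward
    intro hQ U hU h1
    obtain ⟨Us, hUsom, hUsq⟩ := hQ 1
    obtain ⟨W, hWo, hW1, hWsym, hWU, hWcube⟩ := my_exists_chain Us hUsom
    have hWmul : ∀ n, W (n+1) * W (n+1) ⊆ W n := by
      intro n x hx
      have : x * 1 ∈ W (n+1) * W (n+1) * W (n+1) := mul_mem_mul hx (hW1 _)
      simpa using hWcube n this
    have hstep : ∀ n, W (n+1) ⊆ W n := by
      intro n x hx
      have : x * 1 ∈ W (n+1) * W (n+1) := mul_mem_mul hx (hW1 _)
      simpa using hWmul n this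
    have hanti : Antitone W := antitone_nat_of_succ_le hstep
    have hclosure : ∀ n, closure (W (n+1)) ⊆ W n := by
      intro n x hx
      obtain ⟨y, hy1, hy2⟩ := mem_closure_iff.mp hx ((fun g => x * g) '' W (n+1))
        ((Homeomorph.mulLeft x).isOpenMap _ (hWo _)) ⟨1, hW1 _, by simp⟩
      obtain ⟨w, hw, rfl⟩ := hy1
      have : (x * w) * w⁻¹ ∈ W n := hWmul n (mul_mem_mul hy2 (hWsym _ _ hw))
      simpa using this
    set H : Subgroup G :=
      { carrier := ⋂ n, W n
        one_mem' := mem_iInter.mpr hW1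
        mul_mem' := by
          intro a b ha hb
          rw [mem_iInter] at *
          exact fun n => hWmul n (mul_mem_mul (ha (n+1)) (hb (n+1)))
        inv_mem' := by
          intro a ha
          rw [mem_iInter] at *
          exact fun n => hWsym n _ (ha n) }
      with hHdef
    have hHsub : ∀ n, (H : Set G) ⊆ W n := fun n x hx => mem_iInter.mp hx n
    have hHmem : ∀ x : G, x ∈ (H : Set G) ↔ ∀ n, x ∈ W n := fun x => mem_iInter
    have hHcl : IsClosed (H : Set G) := by
      have : (H : Set G) = ⋂ n, closure (W (n+1)) := by
        ext x
        rw [hHmem]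
        constructor
        · exact fun h => mem_iInter.mpr fun n => subset_closure (h (n+1))
        · intro h n
          exact hclosure n (mem_iInter.mp h n)
      rw [this]
      exact isClosed_iInter fun n => isClosed_closure
    have key_conv : ∀ u : ℕ → G, (∀ n, u n ∈ W n) →
        ∃ p ∈ (H : Set G), ∃ φ : ℕ → ℕ, StrictMono φ ∧ Tendsto (u ∘ φ) atTop (𝓝 p) := by
      intro u hu
      obtain ⟨p, φ, hφ, hconv⟩ := hUsq u (fun n => hWU n (hu n))
      refine ⟨p, ?_, φ, hφ, hconv⟩
      rw [hHmem]
      intro n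
      apply hclosure n
      apply mem_closure_of_tendsto hconv
      rw [eventually_atTop]
      exact ⟨n + 1, fun k hk => hanti (hk.trans (hφ.le_apply)) (hu (φ k))⟩
    have hchar : ∀ O : Set G, IsOpen O → (H : Set G) ⊆ O → ∃ n, W n ⊆ O := by
      intro O hO hHO
      by_contra hcon
      push_neg at hcon
      choose u hu hnot using fun n => not_subset.mp (hcon n)
      obtain ⟨p, hpH, φ, hφ, hconv⟩ := key_conv u hu
      have hev : ∀ᶠ k in atTop, (u ∘ φ) k ∈ O := hconv (hO.mem_nhds (hHO hpH))
      rw [eventually_atTop] at hev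
      obtain ⟨N, hN⟩ := hev
      exact hnot (φ N) (hN N le_rfl)
    have hseq : IsSeqCompact (H : Set G) := by
      intro u hu
      exact key_conv u (fun n => hHsub n (hu n))
    have hqm := QuotientGroup.isQuotientMap_mk H
    -- saturation is closed
    have hsat : ∀ F : Set G, IsClosed F → IsClosed (F * (H : Set G)) := by
      intro F hF
      rw [← closure_subset_iff_isClosed]
      intro x hx
      have pick : ∀ n, ∃ f ∈ F, x⁻¹ * f ∈ W n := by
        intro n
        obtain ⟨y, hy1, hy2⟩ := mem_closure_iff.mp hx ((fun g => x * g) '' W (n+1))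
          ((Homeomorph.mulLeft x).isOpenMap _ (hWo _)) ⟨1, hW1 _, by simp⟩
        obtain ⟨w, hw, rfl⟩ := hy1
        obtain ⟨f, hfF, h, hhH, hfh⟩ := hy2
        refine ⟨f, hfF, ?_⟩
        have hfh' : f * h = x * w := hfh
        have hf : f = x * w * h⁻¹ := by rw [← hfh']; group
        have : x⁻¹ * f = w * h⁻¹ := by rw [hf]; group
        rw [this]
        exact hWmul n (mul_mem_mul hw (hHsub (n+1) (H.inv_mem hhH)))
      choose f hfF hfW using pick
      obtain ⟨p, hpH, φ, hφ, hconv⟩ := key_conv (fun n => x⁻¹ * f n) hfW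
      have hconv2 : Tendsto (fun k => x * (x⁻¹ * f (φ k))) atTop (𝓝 (x * p)) :=
        hconv.const_mul x
      have hconv3 : Tendsto (fun k => f (φ k)) atTop (𝓝 (x * p)) := by
        simpa [mul_inv_cancel_left] using hconv2
      have hxp : x * p ∈ F := hF.mem_of_tendsto hconv3 (Eventually.of_forall fun k => hfF (φ k))
      exact ⟨x * p, hxp, p⁻¹, H.inv_mem hpH, by group⟩
    have hclosedmap : IsClosedMap (QuotientGroup.mk : G → G ⧸ H) := by
      intro F hF
      rw [← hqm.isClosed_preimage]
      have : (QuotientGroup.mk : G → G ⧸ H) ⁻¹' (QuotientGroup.mk '' F) = F * (H : Set G) := by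
        ext g
        simp only [mem_preimage, mem_image]
        constructor
        · rintro ⟨f, hf, hfg⟩
          exact ⟨f, hf, f⁻¹ * g, QuotientGroup.eq.mp hfg, by group⟩
        · rintro ⟨f, hf, h, hhH, rfl⟩
          exact ⟨f, hf, (QuotientGroup.eq.mpr (by simpa using hhH)).symm⟩
      rw [this]
      exact hsat F hF
    refine ⟨H, W, hHcl, hseq, fun n => ⟨hWo n, hHsub n⟩, fun O hO hHO => hchar O hO hHO,
      ?_, ?_, hclosedmap, ?_⟩
    · -- strong q sequence at each point of H
      intro x hx
      refine ⟨fun n => ⟨hWo n, hHsub n hx⟩, fun u hu => ?_⟩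
      obtain ⟨p, _, φ, hφ, hconv⟩ := key_conv u hu
      exact ⟨p, φ, hφ, hconv⟩
    · exact my_quotient_metrizable H W hWo hHsub hWsym hWmul hanti hchar hHcl
    · -- preimage of seq compact is seq compact
      intro Fq hFq g hg
      obtain ⟨q, hqF, φ, hφ, hconv⟩ := hFq (x := fun n => QuotientGroup.mk (g n)) hg
      obtain ⟨g₀, rfl⟩ := QuotientGroup.mk_surjective q
      have hev : ∀ n, ∀ᶠ k in atTop, g₀⁻¹ * g (φ k) ∈ W n := by
        intro n
        have hopen : IsOpen (QuotientGroup.mk '' ((fun g => g₀ * g) '' W (n+1)) : Set (G ⧸ H)) :=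
          QuotientGroup.isOpenMap_coe _ ((Homeomorph.mulLeft g₀).isOpenMap _ (hWo _))
        have hmem : (QuotientGroup.mk g₀ : G ⧸ H) ∈
            QuotientGroup.mk '' ((fun g => g₀ * g) '' W (n+1)) :=
          ⟨g₀, ⟨1, hW1 _, by simp⟩, rfl⟩
        filter_upwards [hconv (hopen.mem_nhds hmem)] with k hk
        obtain ⟨y, ⟨w, hw, rfl⟩, hkq⟩ := hk
        have hmemH : (g₀ * w)⁻¹ * g (φ k) ∈ (H : Set G) := QuotientGroup.eq.mp hkq
        have : w * ((g₀ * w)⁻¹ * g (φ k)) ∈ W n :=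
          hWmul n (mul_mem_mul hw (hHsub (n+1) hmemH))
        have heq : w * ((g₀ * w)⁻¹ * g (φ k)) = g₀⁻¹ * g (φ k) := by group
        rwa [heq] at this
      choose N hN using fun n => eventually_atTop.mp (hev n)
      set ψ : ℕ → ℕ := fun n => Nat.rec (N 0) (fun n ψn => max (ψn + 1) (N (n+1))) n with hψ
      have hψmono : StrictMono ψ := strictMono_nat_of_lt_succ fun n =>
        lt_of_lt_of_le (Nat.lt_succ_self _) (le_max_left _ _)
      have hψN : ∀ n, N n ≤ ψ n := by
        intro n
        cases n with
        | zero => exact le_rfl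
        | succ n => exact le_max_right _ _
      have hu : ∀ n, g₀⁻¹ * g (φ (ψ n)) ∈ W n := fun n => hN n (ψ n) (hψN n)
      obtain ⟨p, hpH, χ, hχ, hconv2⟩ := key_conv _ hu
      refine ⟨g₀ * p, ?_, φ ∘ (ψ ∘ χ), hφ.comp (hψmono.comp hχ), ?_⟩
      · have : (QuotientGroup.mk (g₀ * p) : G ⧸ H) = QuotientGroup.mk g₀ :=
          QuotientGroup.eq.mpr (by simpa using H.inv_mem hpH)
        simpa [mem_preimage, this] using hqF
      · have hc : Tendsto (fun k => g₀ * (g₀⁻¹ * g (φ (ψ (χ k))))) atTop (𝓝 (g₀ * p)) :=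
          hconv2.const_mul g₀
        have heq : (fun k => g₀ * (g₀⁻¹ * g (φ (ψ (χ k))))) = g ∘ (φ ∘ (ψ ∘ χ)) := by
          funext k; simp [mul_inv_cancel_left]
        rwa [heq] at hc
  · -- backward
    intro h x
    obtain ⟨H, V, _, _, hVom, _, hq, _, _, _⟩ := h univ isOpen_univ (mem_univ 1)
    have h1 := hq 1 H.one_mem
    refine ⟨fun n => (fun g => x * g) '' V n, fun n =>
      ⟨(Homeomorph.mulLeft x).isOpenMap _ (hVom n).1, 1, (h1.1 n).2, by simp⟩, ?_⟩
    intro u hu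
    have hv : ∀ n, x⁻¹ * u n ∈ V n := by
      intro n
      obtain ⟨v, hv, hvu⟩ := hu n
      rw [← hvu]
      simpa using hv
    obtain ⟨p, φ, hφ, hconv⟩ := h1.2 _ hv
    refine ⟨x * p, φ, hφ, ?_⟩
    have hc : Tendsto (fun k => x * (x⁻¹ * u (φ k))) atTop (𝓝 (x * p)) := hconv.const_mul x
    have heq : (fun k => x * (x⁻¹ * u (φ k))) = u ∘ φ := by
      funext k; simp [mul_inv_cancel_left]
    rwa [heq] at hc
end

section
/- A Hausdorff topological group G is feathered if and only if G contains a compact subgroup H such that the quotient space G/H is metrizable. -/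
open Filter Topology Set Pointwise TopologicalSpace

universe u

section Helpers

set_option linter.unusedSectionVars false

open QuotientGroup Uniformity

variable {G : Type*} [Group G] [TopologicalSpace G] [IsTopologicalGroup G] [T2Space G]

theorem exists_symm_sq' {U : Set G} (hU : U ∈ 𝓝 (1 : G)) :
    ∃ V : Set G, IsOpen V ∧ (1 : G) ∈ V ∧ V⁻¹ = V ∧ V * V ⊆ U := by
  obtain ⟨V, hVo, hV1, hVU⟩ := exists_open_nhds_one_mul_subset hU
  refine ⟨V ∩ V⁻¹, hVo.inter hVo.inv, ⟨hV1, by simpa using hV1⟩, by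
    simp [Set.inter_comm, inv_inv], ?_⟩
  exact (Set.mul_subset_mul Set.inter_subset_left Set.inter_subset_left).trans hVU

theorem uniform_conj {K U : Set G} (hK : IsCompact K) (hU : IsOpen U) (h1 : (1 : G) ∈ U) :
    ∃ S : Set G, IsOpen S ∧ (1 : G) ∈ S ∧ ∀ h ∈ K, ∀ s ∈ S, h * s * h⁻¹ ∈ U := by
  have hc : Continuous fun p : G × G => p.1 * p.2 * p.1⁻¹ := by continuity
  have key : ∀ h : G, ∃ A B : Set G, IsOpen A ∧ h ∈ A ∧ IsOpen B ∧ (1 : G) ∈ B ∧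
      ∀ a ∈ A, ∀ b ∈ B, a * b * a⁻¹ ∈ U := by
    intro h
    have : (fun p : G × G => p.1 * p.2 * p.1⁻¹) ⁻¹' U ∈ 𝓝 (h, (1 : G)) := by
      refine hc.continuousAt.preimage_mem_nhds ?_
      simpa using hU.mem_nhds (by simpa using h1)
    rw [mem_nhds_prod_iff'] at this
    obtain ⟨A, B, hA, hhA, hB, h1B, hAB⟩ := this
    exact ⟨A, B, hA, hhA, hB, h1B, fun a ha b hb => hAB (Set.mk_mem_prod ha hb)⟩
  choose A B hAo hhA hBo h1B hABU using key
  obtain ⟨t, -, ht⟩ := hK.elim_nhds_subcover A (fun h _ => (hAo h).mem_nhds (hhA h))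
  refine ⟨⋂ h ∈ t, B h, isOpen_biInter_finset (fun h _ => hBo h), by simp [h1B], ?_⟩
  intro h hh s hs
  obtain ⟨h₀, hh₀t, hhA₀⟩ := by simpa using ht hh
  exact hABU h₀ h hhA₀ s (by exact Set.mem_iInter₂.1 hs h₀ hh₀t)

theorem conj_invariant_nbhd (H : Subgroup G) (hH : IsCompact (H : Set G)) {U : Set G}
    (hU : IsOpen U) (h1 : (1 : G) ∈ U) :
    ∃ W : Set G, IsOpen W ∧ (1 : G) ∈ W ∧ W⁻¹ = W ∧ W ⊆ U ∧
      ∀ h ∈ (H : Set G), ∀ w ∈ W, h * w * h⁻¹ ∈ W := by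
  obtain ⟨S, hSo, hS1, hS⟩ := uniform_conj hH hU h1
  set S' : Set G := S ∩ S⁻¹ with hS'
  have hS'o : IsOpen S' := hSo.inter hSo.inv
  have hS'1 : (1 : G) ∈ S' := ⟨hS1, by simpa using hS1⟩
  have hS'symm : S'⁻¹ = S' := by simp [hS', Set.inter_comm, inv_inv]
  refine ⟨⋃ h : (H : Set G), (fun g => (h : G) * g * (h : G)⁻¹) '' S', ?_, ?_, ?_, ?_, ?_⟩
  · refine isOpen_iUnion fun h => ?_
    have : (fun g => (h : G) * g * (h : G)⁻¹) =
        (Homeomorph.mulRight ((h : G))⁻¹) ∘ (Homeomorph.mulLeft (h : G)) := rfl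
    rw [this, Set.image_comp]
    exact (Homeomorph.mulRight _).isOpenMap _ ((Homeomorph.mulLeft _).isOpenMap _ hS'o)
  · exact Set.mem_iUnion.2 ⟨⟨1, H.one_mem⟩, ⟨1, hS'1, by simp⟩⟩
  · ext x
    simp only [Set.mem_inv, Set.mem_iUnion, Set.mem_image]
    constructor
    · rintro ⟨h, s, hsS, hs⟩
      refine ⟨h, s⁻¹, by rw [← hS'symm]; simpa using hsS, ?_⟩
      have : x = ((h : G) * s * (h : G)⁻¹)⁻¹ := by rw [hs]; simp
      rw [this]; group
    · rintro ⟨h, s, hsS, hs⟩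
      refine ⟨h, s⁻¹, by rw [← hS'symm]; simpa using hsS, ?_⟩
      rw [← hs]; group
  · rintro x ⟨_, ⟨h, rfl⟩, s, hsS, rfl⟩
    exact hS h h.2 s hsS.1
  · rintro k hk x ⟨_, ⟨h, rfl⟩, s, hsS, rfl⟩
    refine Set.mem_iUnion.2 ⟨⟨k * h, H.mul_mem hk h.2⟩, s, hsS, ?_⟩
    simp [mul_assoc]

theorem closure_subset_mul' {S V : Set G} (hV : IsOpen V) (h1 : (1 : G) ∈ V)
    (hsym : V⁻¹ = V) : closure S ⊆ S * V := by
  intro x hx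
  have hxV : x ∈ x • V := ⟨1, h1, mul_one x⟩
  obtain ⟨s, ⟨v, hv, hxv⟩, hsS⟩ := mem_closure_iff.1 hx (x • V) (hV.smul x) hxV
  refine ⟨s, hsS, v⁻¹, ?_, by simp only [smul_eq_mul] at hxv; rw [← hxv]; group⟩
  rw [← hsym]; simpa using hv

theorem exists_compact_subgroup_base {K : Set G} (hne : K.Nonempty) (hKc : IsCompact K)
    {O : ℕ → Set G} (hO : ∀ n, IsOpen (O n) ∧ K ⊆ O n)
    (hchar : ∀ W : Set G, IsOpen W → K ⊆ W → ∃ n, O n ⊆ W) :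
    ∃ H : Subgroup G, IsCompact (H : Set G) ∧ ∃ V : ℕ → Set G,
      (∀ n, IsOpen (V n) ∧ (H : Set G) ⊆ V n) ∧
      (∀ W : Set G, IsOpen W → (H : Set G) ⊆ W → ∃ n, V n ⊆ W) := by
  obtain ⟨k, hk⟩ := hne
  -- normalize so that 1 ∈ K
  set K' : Set G := (fun x => k⁻¹ * x) '' K with hK'def
  have hK'c : IsCompact K' := hKc.image (continuous_mul_left k⁻¹)
  have h1K' : (1 : G) ∈ K' := ⟨k, hk, inv_mul_cancel k⟩
  set O' : ℕ → Set G := fun n => (fun x => k⁻¹ * x) '' (O n) with hO'def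
  have hO'o : ∀ n, IsOpen (O' n) := fun n =>
    (Homeomorph.mulLeft k⁻¹).isOpenMap _ (hO n).1
  have hKO' : ∀ n, K' ⊆ O' n := fun n => Set.image_mono (hO n).2
  have hchar' : ∀ W : Set G, IsOpen W → K' ⊆ W → ∃ n, O' n ⊆ W := by
    intro W hW hK'W
    have hsub : K ⊆ (fun x => k * x) '' W := by
      intro x hx
      exact ⟨k⁻¹ * x, hK'W ⟨x, hx, rfl⟩, by group⟩
    obtain ⟨n, hn⟩ := hchar ((fun x => k * x) '' W)
      ((Homeomorph.mulLeft k).isOpenMap _ hW) hsub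
    refine ⟨n, ?_⟩
    rintro x ⟨y, hy, rfl⟩
    obtain ⟨w, hw, hwy⟩ := hn hy
    have hwk : w = k⁻¹ * y := by rw [← hwy]; simp
    show k⁻¹ * y ∈ W
    rw [← hwk]; exact hw
  clear hchar hO hKc hk
  -- the recursive sequence V
  have key : ∀ (p : {V : Set G // IsOpen V ∧ (1 : G) ∈ V}) (n : ℕ),
      ∃ q : {V : Set G // IsOpen V ∧ (1 : G) ∈ V},
        (q : Set G)⁻¹ = q ∧ (q : Set G) * q ⊆ p ∧ K' * q ⊆ O' n ∧ (q : Set G) ⊆ p := by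
    rintro ⟨P, hPo, hP1⟩ n
    obtain ⟨T, hT, hKT⟩ := compact_open_separated_mul_right hK'c (hO'o n) (hKO' n)
    have hN : P ∩ interior T ∈ 𝓝 (1 : G) :=
      Filter.inter_mem (hPo.mem_nhds hP1) (interior_mem_nhds.2 hT)
    obtain ⟨V, hVo, hV1, hVsym, hVsq⟩ := exists_symm_sq' hN
    have hVP : V ⊆ P ∩ interior T := (Set.subset_mul_left V hV1).trans hVsq
    refine ⟨⟨V, hVo, hV1⟩, hVsym, hVsq.trans Set.inter_subset_left, ?_,
      hVP.trans Set.inter_subset_left⟩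
    exact (Set.mul_subset_mul_left (hVP.trans (Set.inter_subset_right.trans
      interior_subset))).trans hKT
  choose F hFsym hFsq hFKO hFsub using key
  let f : ℕ → {V : Set G // IsOpen V ∧ (1 : G) ∈ V} := fun n =>
    Nat.rec ⟨Set.univ, isOpen_univ, Set.mem_univ 1⟩ (fun n ih => F ih n) n
  set V : ℕ → Set G := fun n => (f n).1 with hVdef
  have hVo : ∀ n, IsOpen (V n) := fun n => (f n).2.1
  have hV1 : ∀ n, (1 : G) ∈ V n := fun n => (f n).2.2
  have hVsym : ∀ n, (V (n + 1))⁻¹ = V (n + 1) := fun n => hFsym (f n) n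
  have hVsq : ∀ n, V (n + 1) * V (n + 1) ⊆ V n := fun n => hFsq (f n) n
  have hVKO : ∀ n, K' * V (n + 1) ⊆ O' n := fun n => hFKO (f n) n
  have hVsub : ∀ n, V (n + 1) ⊆ V n := fun n => hFsub (f n) n
  have hVanti : Antitone V := antitone_nat_of_succ_le hVsub
  -- the subgroup
  have hmul : ∀ {a b : G}, (∀ n, a ∈ V n) → (∀ n, b ∈ V n) → ∀ n, a * b ∈ V n := by
    intro a b ha hb n
    exact hVsq n ⟨a, ha (n + 1), b, hb (n + 1), rfl⟩
  have hinv : ∀ {a : G}, (∀ n, a ∈ V n) → ∀ n, a⁻¹ ∈ V n := by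
    intro a ha n
    have : a⁻¹ ∈ V (n + 1) := by rw [← hVsym n]; simpa using ha (n + 1)
    exact hVsub n this
  set Hs : Set G := ⋂ n, V n with hHsdef
  have hHsub : ∀ n, Hs ⊆ V n := fun n => Set.iInter_subset _ n
  have hHK' : Hs ⊆ K' := by
    intro x hx
    by_contra hxK
    obtain ⟨Uo, Vo, hUo, hVo', hKU, hxV, hdis⟩ :=
      SeparatedNhds.of_isCompact_isClosed hK'c isClosed_singleton
        (Set.disjoint_singleton_right.2 hxK)
    obtain ⟨n, hn⟩ := hchar' Uo hUo hKU
    have hxU : x ∈ Uo := hn (hVKO n ⟨1, h1K', x, hHsub (n + 1) hx, one_mul x⟩)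
    exact Set.disjoint_left.1 hdis hxU (hxV rfl)
  have hclV : ∀ n, closure (V (n + 1)) ⊆ V n := fun n =>
    (closure_subset_mul' (hVo (n + 1)) (hV1 (n + 1)) (hVsym n)).trans (hVsq n)
  have hHcl_eq : Hs = ⋂ n, closure (V (n + 1)) := by
    apply Set.Subset.antisymm
    · exact fun x hx => Set.mem_iInter.2 fun n => subset_closure (Set.mem_iInter.1 hx (n + 1))
    · exact fun x hx => Set.mem_iInter.2 fun n => hclV n (Set.mem_iInter.1 hx n)
  have hHclosed : IsClosed Hs := by
    rw [hHcl_eq]; exact isClosed_iInter fun n => isClosed_closure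
  have hHcomp : IsCompact Hs := hK'c.of_isClosed_subset hHclosed hHK'
  have hbase : ∀ W : Set G, IsOpen W → Hs ⊆ W → ∃ n, V n ⊆ W := by
    intro W hW hHW
    by_contra hcon
    push_neg at hcon
    set C : ℕ → Set G := fun n => closure (V (n + 1)) ∩ Wᶜ with hCdef
    have hCcl : ∀ n, IsClosed (C n) := fun n => isClosed_closure.inter hW.isClosed_compl
    have hCne : ∀ n, (C n).Nonempty := by
      intro n
      obtain ⟨x, hxV, hxW⟩ := Set.not_subset.1 (hcon (n + 1))
      exact ⟨x, subset_closure hxV, hxW⟩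
    have hCanti : Antitone C := antitone_nat_of_succ_le fun n =>
      Set.inter_subset_inter_left _ ((hclV (n + 1)).trans subset_closure)
    have hCV : ∀ n, C n ⊆ V n := fun n x hx => hclV n hx.1
    have hInt : (⋂ n, C n) = ∅ := by
      apply Set.eq_empty_of_subset_empty
      intro x hx
      have hxH : x ∈ Hs := by
        rw [hHcl_eq]
        exact Set.mem_iInter.2 fun n => (Set.mem_iInter.1 hx n).1
      exact (Set.mem_iInter.1 hx 0).2 (hHW hxH)
    have hcover : K' ⊆ ⋃ n, (C n)ᶜ := by
      intro x _
      rw [Set.mem_iUnion]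
      by_contra hc
      push_neg at hc
      simp only [Set.notMem_compl_iff] at hc
      exact absurd hInt (Set.Nonempty.ne_empty ⟨x, Set.mem_iInter.2 hc⟩)
    obtain ⟨t, ht⟩ := hK'c.elim_finite_subcover (fun n => (C n)ᶜ)
      (fun n => (hCcl n).isOpen_compl) hcover
    set N := t.sup id with hNdef
    have hKCN : Disjoint K' (C N) := by
      rw [Set.disjoint_left]
      intro x hxK hxC
      obtain ⟨n, hnt, hn⟩ := by simpa using ht hxK
      exact hn (hCanti (Finset.le_sup (f := id) hnt) hxC)
    obtain ⟨Uo, Vo, hUoo, hVoo, hKUo, hCVo, hdisUV⟩ :=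
      SeparatedNhds.of_isCompact_isClosed hK'c (hCcl N) hKCN
    obtain ⟨m, hm⟩ := hchar' Uo hUoo hKUo
    obtain ⟨x, hx⟩ := hCne (max N (m + 1))
    have hx1 : x ∈ C N := hCanti (le_max_left _ _) hx
    have hx2 : x ∈ V (m + 1) := hVanti (le_max_right _ _) (hCV _ hx)
    have hxU : x ∈ Uo := hm (hVKO m ⟨1, h1K', x, hx2, one_mul x⟩)
    exact Set.disjoint_left.1 hdisUV hxU (hCVo hx1)
  exact ⟨{ carrier := Hs
           one_mem' := Set.mem_iInter.2 hV1
           mul_mem' := fun ha hb => Set.mem_iInter.2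
             (hmul (Set.mem_iInter.1 ha) (Set.mem_iInter.1 hb))
           inv_mem' := fun ha => Set.mem_iInter.2 (hinv (Set.mem_iInter.1 ha)) },
    hHcomp, V, fun n => ⟨hVo n, hHsub n⟩, hbase⟩

theorem metrizable_quot (H : Subgroup G) (hHc : IsCompact (H : Set G))
    (V : ℕ → Set G) (hVo : ∀ n, IsOpen (V n)) (hHV : ∀ n, (H : Set G) ⊆ V n)
    (hbase : ∀ S : Set G, IsOpen S → (H : Set G) ⊆ S → ∃ n, V n ⊆ S) :
    MetrizableSpace (G ⧸ H) := by
  classical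
  -- Step 1: a sequence of conjugation-invariant symmetric open neighbourhoods of 1
  have key : ∀ (p : {W : Set G // IsOpen W ∧ (1 : G) ∈ W}) (n : ℕ),
      ∃ q : {W : Set G // IsOpen W ∧ (1 : G) ∈ W},
        ((q : Set G))⁻¹ = (q : Set G) ∧
        (∀ h ∈ (H : Set G), ∀ w ∈ (q : Set G), h * w * h⁻¹ ∈ (q : Set G)) ∧
        (q : Set G) * (q : Set G) ⊆ (p : Set G) ∧ (H : Set G) * (q : Set G) ⊆ V n := by
    rintro ⟨P, hPo, hP1⟩ n
    obtain ⟨T, hT, hHT⟩ := compact_open_separated_mul_right hHc (hVo n) (hHV n)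
    obtain ⟨Q, hQo, hQ1, _, hQsq⟩ := exists_symm_sq' (hPo.mem_nhds hP1)
    have hUo : IsOpen (interior T ∩ Q) := isOpen_interior.inter hQo
    have hU1 : (1 : G) ∈ interior T ∩ Q := ⟨mem_interior_iff_mem_nhds.2 hT, hQ1⟩
    obtain ⟨W, hWo, hW1, hWsym, hWU, hWconj⟩ := conj_invariant_nbhd H hHc hUo hU1
    refine ⟨⟨W, hWo, hW1⟩, hWsym, hWconj, ?_, ?_⟩
    · exact (Set.mul_subset_mul (hWU.trans Set.inter_subset_right)
        (hWU.trans Set.inter_subset_right)).trans hQsq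
    · exact (Set.mul_subset_mul_left (hWU.trans
        (Set.inter_subset_left.trans interior_subset))).trans hHT
  choose F hFsym hFconj hFsq hFHV using key
  let f : ℕ → {W : Set G // IsOpen W ∧ (1 : G) ∈ W} := fun n =>
    Nat.rec (F ⟨Set.univ, isOpen_univ, Set.mem_univ 1⟩ 0) (fun n ih => F ih (n + 1)) n
  set W : ℕ → Set G := fun n => (f n).1 with hWdef
  have hWo : ∀ n, IsOpen (W n) := fun n => (f n).2.1
  have hW1 : ∀ n, (1 : G) ∈ W n := fun n => (f n).2.2
  have hWsym : ∀ n, (W n)⁻¹ = W n := by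
    intro n; cases n with
    | zero => exact hFsym _ 0
    | succ n => exact hFsym (f n) (n + 1)
  have hWconj : ∀ n, ∀ h ∈ (H : Set G), ∀ w ∈ W n, h * w * h⁻¹ ∈ W n := by
    intro n; cases n with
    | zero => exact hFconj _ 0
    | succ n => exact hFconj (f n) (n + 1)
  have hWHV : ∀ n, (H : Set G) * W n ⊆ V n := by
    intro n; cases n with
    | zero => exact hFHV _ 0
    | succ n => exact hFHV (f n) (n + 1)
  have hWsq : ∀ n, W (n + 1) * W (n + 1) ⊆ W n := fun n => hFsq (f n) (n + 1)
  -- Step 2: the sets M n = W n * H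
  set M : ℕ → Set G := fun n => W n * (H : Set G) with hMdef
  have hMopen : ∀ n, IsOpen (M n) := fun n => (hWo n).mul_right
  have hM1 : ∀ n, (1 : G) ∈ M n := fun n => ⟨1, hW1 n, 1, H.one_mem, mul_one 1⟩
  have hMH : ∀ n, M n * (H : Set G) ⊆ M n := by
    rintro n x ⟨y, ⟨w, hw, h, hh, rfl⟩, h', hh', rfl⟩
    exact ⟨w, hw, h * h', H.mul_mem hh hh', (mul_assoc _ _ _).symm⟩
  have hHM : ∀ n, (H : Set G) * M n ⊆ M n := by
    rintro n x ⟨h, hh, y, ⟨w, hw, h', hh', rfl⟩, rfl⟩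
    exact ⟨h * w * h⁻¹, hWconj n h hh w hw, h * h', H.mul_mem hh hh', by group⟩
  have hMM : ∀ n, M (n + 1) * M (n + 1) ⊆ M n := by
    rintro n x ⟨y, ⟨w1, hw1, h1, hh1, rfl⟩, z, ⟨w2, hw2, h2, hh2, rfl⟩, rfl⟩
    exact ⟨w1 * (h1 * w2 * h1⁻¹),
      hWsq n (Set.mul_mem_mul hw1 (hWconj (n + 1) h1 hh1 w2 hw2)),
      h1 * h2, H.mul_mem hh1 hh2, by group⟩
  have hMinv : ∀ n, ∀ x ∈ M n, x⁻¹ ∈ M n := by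
    rintro n x ⟨w, hw, h, hh, rfl⟩
    have hwi : w⁻¹ ∈ W n := by rw [← hWsym n]; simpa using hw
    have hc := hWconj n h⁻¹ (H.inv_mem hh) w⁻¹ hwi
    rw [inv_inv] at hc
    exact ⟨h⁻¹ * w⁻¹ * h, hc, h⁻¹, H.inv_mem hh, by group⟩
  have hManti : Antitone M := antitone_nat_of_succ_le fun n x hx =>
    hMM n ⟨x, hx, 1, hM1 (n + 1), mul_one x⟩
  have hMbase : ∀ S : Set G, IsOpen S → (H : Set G) ⊆ S → ∃ n, M n ⊆ S := by
    intro S hS hHS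
    obtain ⟨n, hn⟩ := hbase S hS hHS
    refine ⟨n, ?_⟩
    rintro x ⟨w, hw, h, hh, rfl⟩
    have hc := hWconj n h⁻¹ (H.inv_mem hh) w hw
    rw [inv_inv] at hc
    exact hn (hWHV n ⟨h, hh, h⁻¹ * w * h, hc, by group⟩)
  -- Step 3: the entourages
  set D : ℕ → Set ((G ⧸ H) × (G ⧸ H)) := fun n =>
    (fun p : G × G => (QuotientGroup.mk p.1, QuotientGroup.mk p.2)) ''
      {p : G × G | p.1⁻¹ * p.2 ∈ M n} with hDdef
  have memD' : ∀ (q : (G ⧸ H) × (G ⧸ H)) (n : ℕ), q ∈ D n ↔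
      ∃ x y : G, q = (QuotientGroup.mk x, QuotientGroup.mk y) ∧ x⁻¹ * y ∈ M n := by
    intro q n
    constructor
    · rintro ⟨⟨x, y⟩, h, rfl⟩; exact ⟨x, y, rfl, h⟩
    · rintro ⟨x, y, rfl, h⟩; exact ⟨(x, y), h, rfl⟩
  have memD : ∀ (x y : G) (n : ℕ),
      ((QuotientGroup.mk x : G ⧸ H), (QuotientGroup.mk y : G ⧸ H)) ∈ D n ↔ x⁻¹ * y ∈ M n := by
    intro x y n
    rw [memD']
    constructor
    · rintro ⟨x', y', heq, hm⟩
      rw [Prod.ext_iff] at heq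
      have h1 : x⁻¹ * x' ∈ H := QuotientGroup.eq.1 heq.1
      have h2 : y'⁻¹ * y ∈ H := QuotientGroup.eq.1 heq.2.symm
      have hxy : x⁻¹ * y = (x⁻¹ * x') * ((x'⁻¹ * y') * (y'⁻¹ * y)) := by group
      rw [hxy]
      exact hHM n (Set.mul_mem_mul h1 (hMH n (Set.mul_mem_mul hm h2)))
    · intro h; exact ⟨x, y, rfl, h⟩
  have hDanti : Antitone D := fun m n hmn => Set.image_mono fun p hp => hManti hmn hp
  -- Step 4: the uniformity
  let B : FilterBasis ((G ⧸ H) × (G ⧸ H)) :=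
    { sets := Set.range D
      nonempty := ⟨D 0, 0, rfl⟩
      inter_sets := by
        rintro _ _ ⟨m, rfl⟩ ⟨n, rfl⟩
        exact ⟨D (max m n), ⟨max m n, rfl⟩,
          Set.subset_inter (hDanti (le_max_left m n)) (hDanti (le_max_right m n))⟩ }
  have hBmem : ∀ s, s ∈ B ↔ ∃ n, D n = s := fun s => Iff.rfl
  have refl : ∀ r ∈ B, ∀ x, (x, x) ∈ r := by
    rintro r ⟨n, rfl⟩ x
    obtain ⟨g, rfl⟩ := QuotientGroup.mk_surjective x
    exact (memD g g n).2 (by rw [inv_mul_cancel]; exact hM1 n)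
  have symm : ∀ r ∈ B, ∃ t ∈ B, t ⊆ Prod.swap ⁻¹' r := by
    rintro r ⟨n, rfl⟩
    refine ⟨D n, ⟨n, rfl⟩, ?_⟩
    rintro ⟨a, b⟩ hab
    obtain ⟨x, y, heq, hm⟩ := (memD' _ n).1 hab
    rw [Prod.ext_iff] at heq
    obtain ⟨ha, hb⟩ := heq
    subst ha; subst hb
    show ((QuotientGroup.mk y : G ⧸ H), (QuotientGroup.mk x : G ⧸ H)) ∈ D n
    refine (memD y x n).2 ?_
    have := hMinv n _ hm
    rwa [mul_inv_rev, inv_inv] at this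
  have comp : ∀ r ∈ B, ∃ t ∈ B, SetRel.comp t t ⊆ r := by
    rintro r ⟨n, rfl⟩
    refine ⟨D (n + 1), ⟨n + 1, rfl⟩, ?_⟩
    rintro ⟨a, c⟩ ⟨b, hab, hbc⟩
    change (a, b) ∈ D (n + 1) at hab
    change (b, c) ∈ D (n + 1) at hbc
    obtain ⟨x, y, heq1, hm1⟩ := (memD' (a, b) (n + 1)).1 hab
    obtain ⟨y', z, heq2, hm2⟩ := (memD' (b, c) (n + 1)).1 hbc
    rw [Prod.ext_iff] at heq1 heq2
    obtain ⟨ha, hb⟩ := heq1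
    obtain ⟨hb', hc⟩ := heq2
    subst ha; subst hc
    subst hb
    have h2 : y⁻¹ * z ∈ M (n + 1) := by
      have hyy : y'⁻¹ * y ∈ H := QuotientGroup.eq.1 hb'.symm
      have : y⁻¹ * z = ((y'⁻¹ * y)⁻¹ * (y'⁻¹ * z)) := by group
      rw [this]
      exact hHM (n + 1) (Set.mul_mem_mul (H.inv_mem hyy) hm2)
    refine (memD x z n).2 ?_
    have : x⁻¹ * z = (x⁻¹ * y) * (y⁻¹ * z) := by group
    rw [this]
    exact hMM n (Set.mul_mem_mul hm1 h2)
  set u₀ : UniformSpace (G ⧸ H) :=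
    UniformSpace.ofCore (UniformSpace.Core.mkOfBasis B refl symm comp) with hu₀
  -- the balls of the uniformity
  have hball : ∀ (g : G) (n : ℕ),
      Prod.mk (QuotientGroup.mk g : G ⧸ H) ⁻¹' D n
        = QuotientGroup.mk '' ((fun x => g * x) '' M n) := by
    intro g n
    ext q
    constructor
    · intro hq
      obtain ⟨y, rfl⟩ := QuotientGroup.mk_surjective q
      have hm : g⁻¹ * y ∈ M n := (memD g y n).1 hq
      exact ⟨y, ⟨g⁻¹ * y, hm, by group⟩, rfl⟩
    · rintro ⟨_, ⟨m, hm, rfl⟩, rfl⟩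
      refine (memD g (g * m) n).2 ?_
      rwa [inv_mul_cancel_left]
  have hcomap : ∀ g : G, Filter.comap (Prod.mk (QuotientGroup.mk g : G ⧸ H)) B.filter
      = 𝓝 (QuotientGroup.mk g : G ⧸ H) := by
    intro g
    apply Filter.ext
    intro s
    rw [(B.hasBasis.comap (Prod.mk (QuotientGroup.mk g : G ⧸ H))).mem_iff]
    constructor
    · rintro ⟨r, ⟨n, rfl⟩, hsub⟩
      have hopen : IsOpen (QuotientGroup.mk '' ((fun x => g * x) '' M n)) :=
        QuotientGroup.isOpenMap_coe (N := H) _ ((Homeomorph.mulLeft g).isOpenMap _ (hMopen n))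
      have hmem : (QuotientGroup.mk g : G ⧸ H) ∈ QuotientGroup.mk '' ((fun x => g * x) '' M n) :=
        ⟨g, ⟨1, hM1 n, mul_one g⟩, rfl⟩
      refine Filter.mem_of_superset (hopen.mem_nhds hmem) ?_
      rw [← hball]; exact hsub
    · intro hs
      obtain ⟨O, hOsub, hOopen, hgO⟩ := mem_nhds_iff.1 hs
      set T : Set G := QuotientGroup.mk ⁻¹' O with hTdef
      have hTopen : IsOpen T := hOopen.preimage QuotientGroup.continuous_mk
      have hsat : ∀ x ∈ T, ∀ h ∈ (H : Set G), x * h ∈ T := by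
        intro x hx h hh
        show QuotientGroup.mk (x * h) ∈ O
        rw [QuotientGroup.mk_mul_of_mem x hh]
        exact hx
      have hgT : g ∈ T := hgO
      have hSopen : IsOpen ((fun x => g⁻¹ * x) '' T) :=
        (Homeomorph.mulLeft g⁻¹).isOpenMap _ hTopen
      have hHS : (H : Set G) ⊆ (fun x => g⁻¹ * x) '' T := fun h hh =>
        ⟨g * h, hsat g hgT h hh, by group⟩
      obtain ⟨n, hn⟩ := hMbase _ hSopen hHS
      refine ⟨D n, ⟨n, rfl⟩, ?_⟩
      intro q hq
      have hq2 : q ∈ Prod.mk (QuotientGroup.mk g : G ⧸ H) ⁻¹' D n := hq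
      rw [hball g n] at hq2
      obtain ⟨z, ⟨m, hm, rfl⟩, rfl⟩ := hq2
      obtain ⟨x', hx', hxe⟩ := hn hm
      have hgm : g * m = x' := by rw [← hxe]; group
      refine hOsub ?_
      show QuotientGroup.mk (g * m) ∈ O
      rw [hgm]
      exact hx'
  have htop : (QuotientGroup.instTopologicalSpace H : TopologicalSpace (G ⧸ H))
      = u₀.toTopologicalSpace := by
    apply TopologicalSpace.ext_nhds
    intro x
    obtain ⟨g, rfl⟩ := QuotientGroup.mk_surjective x
    exact (hcomap g).symm.trans
      ((UniformSpace.Core.nhds_toTopologicalSpace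
        (UniformSpace.Core.mkOfBasis B refl symm comp) (QuotientGroup.mk g)).symm)
  letI u' : UniformSpace (G ⧸ H) := u₀.replaceTopology htop
  haveI hUcg : (𝓤 (G ⧸ H)).IsCountablyGenerated := by
    have hb : (𝓤 (G ⧸ H)).HasBasis (fun _ : ℕ => True) D := by
      rw [Filter.hasBasis_iff]
      intro t
      have ht : t ∈ 𝓤 (G ⧸ H) ↔ t ∈ B.filter := Iff.rfl
      rw [ht, FilterBasis.mem_filter_iff]
      constructor
      · rintro ⟨s, ⟨n, rfl⟩, h⟩; exact ⟨n, trivial, h⟩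
      · rintro ⟨n, -, h⟩; exact ⟨D n, ⟨n, rfl⟩, h⟩
    exact hb.isCountablyGenerated
  haveI : T1Space (G ⧸ H) := by
    constructor
    intro q
    obtain ⟨g, rfl⟩ := QuotientGroup.mk_surjective q
    rw [← (QuotientGroup.isQuotientMap_mk H).isClosed_preimage]
    have hpre : QuotientGroup.mk ⁻¹' {(QuotientGroup.mk g : G ⧸ H)}
        = (fun x => g * x) '' (H : Set G) := by
      ext x
      simp only [Set.mem_preimage, Set.mem_singleton_iff, Set.mem_image]
      constructor
      · intro hx
        have hmem : x⁻¹ * g ∈ H := QuotientGroup.eq.1 hx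
        have : g⁻¹ * x ∈ H := by
          have := H.inv_mem hmem
          rwa [mul_inv_rev, inv_inv] at this
        exact ⟨g⁻¹ * x, this, by group⟩
      · rintro ⟨h, hh, rfl⟩
        exact QuotientGroup.mk_mul_of_mem g hh
    rw [hpre]
    exact (Homeomorph.mulLeft g).isClosedMap _ hHc.isClosed
  exact UniformSpace.metrizableSpace


theorem isFeathered_of_compact_quotient_metrizable (H : Subgroup G)
    (hH : IsCompact (H : Set G)) (hm : MetrizableSpace (G ⧸ H)) : IsFeathered G := by
  refine ?_
  show ∃ K : Set G, K.Nonempty ∧ IsCompact K ∧ HasCountableCharacter K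
  refine ⟨(H : Set G), ⟨1, H.one_mem⟩, hH, ?_⟩
  letI := hm
  letI := TopologicalSpace.metrizableSpaceMetric (G ⧸ H)
  obtain ⟨s, hs⟩ := (𝓝 ((1 : G) : G ⧸ H)).exists_antitone_basis
  refine ⟨fun n => QuotientGroup.mk ⁻¹' (interior (s n)), fun n => ⟨?_, ?_⟩, ?_⟩
  · exact isOpen_interior.preimage continuous_mk
  · intro h hh
    have : (QuotientGroup.mk h : G ⧸ H) = QuotientGroup.mk 1 := by
      rw [QuotientGroup.eq]; simpa using H.inv_mem hh
    simp only [Set.mem_preimage, this]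
    exact mem_interior_iff_mem_nhds.2 (hs.toHasBasis.mem_of_mem trivial)
  · intro W hW hHW
    obtain ⟨T, hT, hTH⟩ := compact_open_separated_mul_left hH hW hHW
    have hT1 : (1:G) ∈ interior T := mem_interior_iff_mem_nhds.2 hT
    have hopen : IsOpen (interior T * (H : Set G)) := isOpen_interior.mul_right
    have hmem : QuotientGroup.mk '' (interior T * (H : Set G)) ∈ 𝓝 ((1 : G) : G ⧸ H) := by
      refine (QuotientGroup.isOpenMap_coe _ hopen).mem_nhds ?_
      exact ⟨1, ⟨1, hT1, 1, H.one_mem, by simp⟩, rfl⟩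
    obtain ⟨n, -, hn⟩ := hs.toHasBasis.mem_iff.1 hmem
    refine ⟨n, ?_⟩
    have : (QuotientGroup.mk (s := H)) ⁻¹' (QuotientGroup.mk (s := H) '' (interior T * (H : Set G))) ⊆ W := by
      rw [QuotientGroup.preimage_image_mk_eq_mul]
      calc interior T * (H : Set G) * (H:Set G) = interior T * ((H:Set G) * H) := by
            rw [mul_assoc]
        _ = interior T * (H : Set G) := by rw [coe_mul_coe]
        _ ⊆ T * (H : Set G) := mul_subset_mul_right interior_subset
        _ ⊆ W := hTH
    exact (preimage_mono (interior_subset.trans hn)).trans this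

end Helpers

theorem feathered_iff_compact_subgroup (G : Type*) [Group G] [TopologicalSpace G] [IsTopologicalGroup G] [T2Space G] :
    IsFeathered G ↔
      ∃ H : Subgroup G, IsCompact (H : Set G) ∧ MetrizableSpace (G ⧸ H) := by
  constructor
  · rintro ⟨K, hne, hKc, O, hO, hchar⟩
    obtain ⟨H, hHc, V, hV, hbase⟩ := exists_compact_subgroup_base hne hKc hO hchar
    exact ⟨H, hHc, metrizable_quot H hHc V (fun n => (hV n).1) (fun n => (hV n).2) hbase⟩
  · rintro ⟨H, hHc, hm⟩
    exact isFeathered_of_compact_quotient_metrizable H hHc hm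
end

section
/- If H is a closed neutral subgroup of a Hausdorff topological group G such that the quotient space G/H is first-countable, then G/H is metrizable. -/
open Filter Topology Set Pointwise TopologicalSpace

universe u

section QAux

variable {G : Type*} [Group G] {H : Subgroup G}

/-- The two-sided `H`-saturation `H * U * H` of a set. -/
def qsat (H : Subgroup G) (U : Set G) : Set G := (H : Set G) * U * (H : Set G)

/-- The entourage on `G ⧸ H` associated to a set `U ⊆ G`. -/
def qent (H : Subgroup G) (U : Set G) : Set ((G ⧸ H) × (G ⧸ H)) :=
  {p | ∃ x y : G, (x : G ⧸ H) = p.1 ∧ (y : G ⧸ H) = p.2 ∧ x⁻¹ * y ∈ qsat H U}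

lemma mem_qsat_of_mem {U : Set G} {u : G} (hu : u ∈ U) : u ∈ qsat H U := by
  have : (1 : G) * u * 1 ∈ qsat H U :=
    Set.mul_mem_mul (Set.mul_mem_mul H.one_mem hu) H.one_mem
  simpa using this

lemma qsat_mono {U V : Set G} (h : U ⊆ V) : qsat H U ⊆ qsat H V :=
  Set.mul_subset_mul_right (Set.mul_subset_mul_left h)

lemma qsat_closed {U : Set G} {h₁ s h₂ : G} (hh₁ : h₁ ∈ H) (hs : s ∈ qsat H U)
    (hh₂ : h₂ ∈ H) : h₁ * s * h₂ ∈ qsat H U := by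
  obtain ⟨c, hc, b, hb, rfl⟩ := hs
  obtain ⟨a, ha, u, hu, rfl⟩ := hc
  have : (h₁ * a) * u * (b * h₂) ∈ qsat H U :=
    Set.mul_mem_mul (Set.mul_mem_mul (H.mul_mem hh₁ ha) hu) (H.mul_mem hb hh₂)
  convert this using 1
  group

lemma mem_qent {U : Set G} {x y : G} :
    ((x : G ⧸ H), (y : G ⧸ H)) ∈ qent H U ↔ x⁻¹ * y ∈ qsat H U := by
  constructor
  · rintro ⟨a, b, ha, hb, hab⟩
    rw [QuotientGroup.eq] at ha hb
    have : (x⁻¹ * a) * (a⁻¹ * b) * (b⁻¹ * y) ∈ qsat H U :=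
      qsat_closed ((H.inv_mem_iff).1 (by simpa using ha)) hab hb
    convert this using 1
    group
  · intro h
    exact ⟨x, y, rfl, rfl, h⟩

lemma qent_mono' {U V : Set G} (h : qsat H U ⊆ qsat H V) : qent H U ⊆ qent H V := by
  rintro p ⟨x, y, hx, hy, hxy⟩
  exact ⟨x, y, hx, hy, h hxy⟩

lemma qent_mono : Monotone (qent H (G := G)) := fun _ _ h => qent_mono' (qsat_mono h)

lemma qsat_inv {U : Set G} {s : G} (hs : s ∈ qsat H U) : s⁻¹ ∈ qsat H U⁻¹ := by
  obtain ⟨c, hc, b, hb, rfl⟩ := hs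
  obtain ⟨a, ha, u, hu, rfl⟩ := hc
  have : b⁻¹ * u⁻¹ * a⁻¹ ∈ qsat H U⁻¹ :=
    Set.mul_mem_mul (Set.mul_mem_mul (H.inv_mem hb) (Set.inv_mem_inv.2 hu)) (H.inv_mem ha)
  convert this using 1
  group

end QAux

theorem quotient_metrizable_of_neutral (G : Type*) [Group G] [TopologicalSpace G] [IsTopologicalGroup G] [T2Space G] (H : Subgroup G)
    (hcl : IsClosed (H : Set G)) (hn : IsNeutralSubgroup H)
    (hfc : FirstCountableTopology (G ⧸ H)) :
    MetrizableSpace (G ⧸ H) := by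
  classical
  haveI := hfc
  have hcont : Continuous (QuotientGroup.mk : G → G ⧸ H) := continuous_quot_mk
  have hopen : IsOpenMap (QuotientGroup.mk : G → G ⧸ H) := QuotientGroup.isOpenMap_coe
  -- the quotient is T1
  haveI hT1 : T1Space (G ⧸ H) := by
    refine ⟨fun q => ?_⟩
    obtain ⟨x, rfl⟩ := QuotientGroup.mk_surjective q
    rw [← (QuotientGroup.isQuotientMap_mk H).isClosed_preimage]
    have : ((QuotientGroup.mk : G → G ⧸ H) ⁻¹' {(x : G ⧸ H)})
        = (fun y : G => y⁻¹ * x) ⁻¹' (H : Set G) := by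
      ext y
      simp [QuotientGroup.eq]
    rw [this]
    exact hcl.preimage (continuous_inv.mul continuous_const)
  -- the uniformity on the quotient
  set 𝓤q : Filter ((G ⧸ H) × (G ⧸ H)) := (𝓝 (1 : G)).lift' (qent H) with h𝓤q
  have hbasis : 𝓤q.HasBasis (fun U : Set G => U ∈ 𝓝 (1 : G)) (qent H) :=
    (𝓝 (1 : G)).basis_sets.lift' qent_mono
  -- multiplication of saturations
  have key_comp : ∀ U ∈ 𝓝 (1 : G), ∃ W ∈ 𝓝 (1 : G),
      ∀ s₁ ∈ qsat H W, ∀ s₂ ∈ qsat H W, s₁ * s₂ ∈ qsat H U := by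
    intro U hU
    obtain ⟨V, Vop, V1, hVV⟩ := exists_open_nhds_one_mul_subset hU
    obtain ⟨W, Wop, W1, hHW⟩ := hn V Vop V1
    refine ⟨W, Wop.mem_nhds W1, ?_⟩
    have hW : ∀ h ∈ H, ∀ w ∈ W, ∃ v ∈ V, ∃ h' ∈ (H : Set G), v * h' = h * w := by
      intro h hh w hw
      have : h * w ∈ V * (H : Set G) := hHW (Set.mul_mem_mul hh hw)
      simpa [Set.mem_mul] using this
    rintro s₁ hs₁ s₂ hs₂
    obtain ⟨c, hc, b, hb, rfl⟩ := hs₁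
    obtain ⟨a, ha, w, hw, rfl⟩ := hc
    obtain ⟨c', hc', b', hb', rfl⟩ := hs₂
    obtain ⟨a', ha', w', hw', rfl⟩ := hc'
    obtain ⟨v₀, hv₀, h₀, hh₀, e₀⟩ := hW a ha w hw
    obtain ⟨v₁, hv₁, h₁, hh₁, e₁⟩ :=
      hW (h₀ * (b * a')) (H.mul_mem hh₀ (H.mul_mem hb ha')) w' hw'
    have hmem : (1 : G) * (v₀ * v₁) * (h₁ * b') ∈ qsat H U :=
      Set.mul_mem_mul (Set.mul_mem_mul H.one_mem (hVV (Set.mul_mem_mul hv₀ hv₁)))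
        (H.mul_mem hh₁ hb')
    have e : a * w * b * (a' * w' * b') = (1 : G) * (v₀ * v₁) * (h₁ * b') := by
      calc a * w * b * (a' * w' * b')
          = v₀ * h₀ * b * (a' * w' * b') := by rw [e₀]
        _ = v₀ * (h₀ * (b * a') * w') * b' := by group
        _ = v₀ * (v₁ * h₁) * b' := by rw [e₁]
        _ = (1 : G) * (v₀ * v₁) * (h₁ * b') := by group
    rw [e]; exact hmem
  -- symmetry
  have hsymm : Filter.Tendsto Prod.swap 𝓤q 𝓤q := by
    rw [Filter.tendsto_def]
    intro s hs
    obtain ⟨U, hU, hsub⟩ := hbasis.mem_iff.1 hs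
    refine Filter.mem_of_superset (hbasis.mem_of_mem (inv_mem_nhds_one G hU)) ?_
    rintro ⟨p₁, p₂⟩ ⟨x, y, hx, hy, hxy⟩
    refine hsub ⟨y, x, hy, hx, ?_⟩
    have := qsat_inv hxy
    simpa [mul_inv_rev] using this
  -- composition
  have hcomp : (𝓤q.lift' fun s => SetRel.comp s s) ≤ 𝓤q := by
    rw [Filter.le_def]
    intro s hs
    obtain ⟨U, hU, hsub⟩ := hbasis.mem_iff.1 hs
    obtain ⟨W, hW, hmul⟩ := key_comp U hU
    have hmono2 : Monotone (fun t : Set ((G ⧸ H) × (G ⧸ H)) => SetRel.comp t t) :=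
      fun a b hab => SetRel.comp_subset_comp hab hab
    refine (Filter.mem_lift'_sets hmono2).2 ⟨qent H W, hbasis.mem_of_mem hW, ?_⟩
    rintro ⟨p₁, p₂⟩ ⟨q, hq1, hq2⟩
    obtain ⟨x, y, hx, hy, hxy⟩ := hq1
    obtain ⟨y', z, hy', hz, h'⟩ := hq2
    have hx1 : (x : G ⧸ H) = p₁ := hx
    have hy1 : (y : G ⧸ H) = q := hy
    have hz1 : (z : G ⧸ H) = p₂ := hz
    have hy'1 : (y' : G ⧸ H) = q := hy'
    have h2 : y⁻¹ * z ∈ qsat H W := mem_qent.1 ⟨y', z, hy'1.trans hy1.symm, rfl, h'⟩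
    refine hsub ?_
    rw [← hx1, ← hz1]
    refine mem_qent.2 ?_
    have hm : (x⁻¹ * y) * (y⁻¹ * z) ∈ qsat H U := hmul _ hxy _ h2
    convert hm using 1
    group
  -- compatibility with the quotient topology
  have hnhds : ∀ p : G ⧸ H, 𝓝 p = Filter.comap (Prod.mk p) 𝓤q := by
    intro p
    obtain ⟨x, rfl⟩ := QuotientGroup.mk_surjective p
    refine le_antisymm ?_ ?_
    · rw [← Filter.map_le_iff_le_comap, Filter.le_def]
      intro s hs
      rw [Filter.mem_map]
      obtain ⟨U, hU, hsub⟩ := hbasis.mem_iff.1 hs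
      obtain ⟨U₀, hU₀U, U₀op, hU₀1⟩ := mem_nhds_iff.1 hU
      refine Filter.mem_of_superset
        ((hopen _ (U₀op.smul x)).mem_nhds
          ⟨x, Set.mem_smul_set.2 ⟨1, hU₀1, by simp⟩, rfl⟩) ?_
      rintro q ⟨y, hy, rfl⟩
      obtain ⟨u, hu, hu2⟩ := Set.mem_smul_set.1 hy
      refine hsub (mem_qent.2 ?_)
      have he : x⁻¹ * y = u := by rw [← hu2]; simp [smul_eq_mul]
      rw [he]
      exact mem_qsat_of_mem (hU₀U hu)
    · intro s hs
      have hpre : (QuotientGroup.mk : G → G ⧸ H) ⁻¹' s ∈ 𝓝 x :=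
        hcont.continuousAt.preimage_mem_nhds hs
      obtain ⟨O, hOsub, Oop, hxO⟩ := mem_nhds_iff.1 hpre
      have Vop : IsOpen ((fun g : G => x * g) ⁻¹' O) := Oop.preimage (by continuity)
      have V1 : (1 : G) ∈ (fun g : G => x * g) ⁻¹' O := by simpa using hxO
      obtain ⟨W, Wop, W1, hHW⟩ := hn _ Vop V1
      rw [Filter.mem_comap]
      refine ⟨qent H W, hbasis.mem_of_mem (Wop.mem_nhds W1), ?_⟩
      intro q hq
      obtain ⟨x', y, hx', hy, hxy⟩ := hq
      have hy0 : (y : G ⧸ H) = q := hy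
      have hx0 : (x' : G ⧸ H) = (x : G ⧸ H) := hx'
      have hxy' : x⁻¹ * y ∈ qsat H W := mem_qent.1 ⟨x', y, hx0, rfl, hxy⟩
      obtain ⟨c, hc, b, hb, hcb0⟩ := hxy'
      obtain ⟨a, ha, w, hw, rfl⟩ := hc
      have hcb : a * w * b = x⁻¹ * y := hcb0
      have haw : a * w ∈ ((fun g : G => x * g) ⁻¹' O) * (H : Set G) :=
        hHW (Set.mul_mem_mul ha hw)
      obtain ⟨v, hv, h, hh, hvh0⟩ := haw
      have hvh : v * h = a * w := hvh0
      have ey : (x * v) * (h * b) = y := by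
        calc (x * v) * (h * b) = x * (v * h * b) := by group
          _ = x * (a * w * b) := by rw [hvh]
          _ = x * (x⁻¹ * y) := by rw [hcb]
          _ = y := by group
      have hq' : q = ((x * v : G) : G ⧸ H) := by
        rw [← hy0, ← ey, QuotientGroup.mk_mul_of_mem _ (H.mul_mem hh hb)]
      rw [hq']
      exact hOsub hv
  -- countable basis of the uniformity
  obtain ⟨O, hO⟩ := (𝓝 ((1 : G) : G ⧸ H)).exists_antitone_basis
  set P : ℕ → Set G := fun n => (QuotientGroup.mk : G → G ⧸ H) ⁻¹' O n with hP
  have hPn : ∀ n, P n ∈ 𝓝 (1 : G) := fun n =>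
    hcont.continuousAt.preimage_mem_nhds (hO.1.mem_of_mem trivial)
  have hHH : (H : Set G) * (H : Set G) = (H : Set G) := by
    ext z
    constructor
    · rintro ⟨a, ha, b, hb, rfl⟩
      exact H.mul_mem ha hb
    · intro hz
      exact ⟨z, hz, 1, H.one_mem, mul_one z⟩
  have hbasis2 : 𝓤q.HasBasis (fun _ : ℕ => True) (fun n => qent H (P n)) := by
    refine hbasis.to_hasBasis (fun U hU => ?_) (fun n _ => ⟨P n, hPn n, subset_rfl⟩)
    obtain ⟨V, hVU, Vop, V1⟩ := mem_nhds_iff.1 hU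
    have Top : IsOpen ((H : Set G) * (V * (H : Set G))) :=
      IsOpen.mul_left (Vop.mul_right)
    have hTsat : qsat H V = (H : Set G) * (V * (H : Set G)) :=
      mul_assoc (H : Set G) V (H : Set G)
    have h1T : (1 : G) ∈ (H : Set G) * (V * (H : Set G)) := by
      rw [← hTsat]; exact mem_qsat_of_mem V1
    have himg : (QuotientGroup.mk : G → G ⧸ H) '' ((H : Set G) * (V * (H : Set G)))
        ∈ 𝓝 ((1 : G) : G ⧸ H) :=
      (hopen _ Top).mem_nhds ⟨1, h1T, rfl⟩
    obtain ⟨n, -, hOn⟩ := hO.1.mem_iff.1 himg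
    have hPsub : P n ⊆ qsat H V := by
      have : P n ⊆ ((H : Set G) * (V * (H : Set G))) * (H : Set G) := by
        intro g hg
        have := hOn hg
        rw [← QuotientGroup.preimage_image_mk_eq_mul]
        exact this
      have hq2 : qsat H V * (H : Set G) = qsat H V := by
        show ((H : Set G) * V * (H : Set G)) * (H : Set G) = (H : Set G) * V * (H : Set G)
        rw [mul_assoc ((H : Set G) * V), hHH]
      refine this.trans ?_
      rw [← hTsat, hq2]
    refine ⟨n, trivial, qent_mono' ?_⟩
    intro s hs
    obtain ⟨c, hc, b, hb, rfl⟩ := hs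
    obtain ⟨a, ha, p, hp, rfl⟩ := hc
    exact qsat_mono hVU (qsat_closed ha (hPsub hp) hb)
  have hcg : Filter.IsCountablyGenerated 𝓤q := hbasis2.isCountablyGenerated
  -- assemble the uniform space
  letI u : UniformSpace (G ⧸ H) :=
    { toTopologicalSpace := inferInstance
      uniformity := 𝓤q
      symm := hsymm
      comp := hcomp
      nhds_eq_comap_uniformity := hnhds }
  have ht0 : T0Space (G ⧸ H) := inferInstance
  exact @UniformSpace.metrizableSpace (G ⧸ H) u hcg ht0
end

section
/- Let {U_n : n ∈ ω} be a decreasing sequence of open subsets of a topological space X such that ⋂_{n∈ω} U_n = ⋂_{n∈ω} cl(U_n), and put C = ⋂_{n∈ω} U_n. Then the following are equivalent: (1) {U_n : n ∈ ω} is a q-sequence in X, i.e. every sequence (x_n) with x_n ∈ U_n for all n has an accumulation (cluster) point in X; (2) the family {U_n : n ∈ ω} is a base at C in X (every open set containing C contains some U_n) and C is countably compact. -/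
open Filter Topology Set Pointwise TopologicalSpace

universe u

theorem qSequence_iff_base_and_countablyCompact {X : Type*} [TopologicalSpace X]
    (U : ℕ → Set X) (hop : ∀ n, IsOpen (U n)) (hdec : Antitone U)
    (heq : ⋂ n, U n = ⋂ n, closure (U n)) :
    (∀ u : ℕ → X, (∀ n, u n ∈ U n) → ∃ p : X, MapClusterPt p Filter.atTop u) ↔
      ((∀ W : Set X, IsOpen W → (⋂ n, U n) ⊆ W → ∃ n, U n ⊆ W) ∧
        IsCountablyCompactIn (⋂ n, U n)) := by
  set C := ⋂ n, U n with hC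
  constructor
  · intro hq
    constructor
    · intro W hW hCW
      by_contra h
      push_neg at h
      have h' : ∀ n, ∃ x, x ∈ U n ∧ x ∉ W := fun n => Set.not_subset.mp (h n)
      choose u hu huW using h'
      obtain ⟨p, hp⟩ := hq u hu
      rw [mapClusterPt_iff_frequently] at hp
      have hpC : p ∈ C := by
        rw [heq]
        refine Set.mem_iInter.mpr fun n => ?_
        rw [mem_closure_iff_nhds]
        intro t ht
        obtain ⟨m, hmn, hms⟩ := ((hp t ht).and_eventually (eventually_ge_atTop n)).exists
        exact ⟨u m, hmn, hdec hms (hu m)⟩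
      obtain ⟨m, hm⟩ := (hp W (hW.mem_nhds (hCW hpC))).exists
      exact huW m hm
    · intro V hVop hVc
      by_contra h
      push_neg at h
      have h' : ∀ n : ℕ, ∃ x, x ∈ C ∧ x ∉ ⋃ k ∈ Finset.range (n+1), V k := fun n => by
        obtain ⟨x, hx⟩ := Set.not_subset.mp (h (Finset.range (n+1)))
        exact ⟨x, hx.1, hx.2⟩
      choose u hu huV using h'
      obtain ⟨p, hp⟩ := hq u (fun n => Set.mem_iInter.mp (hu n) n)
      rw [mapClusterPt_iff_frequently] at hp
      have hpC : p ∈ C := by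
        rw [heq]
        refine Set.mem_iInter.mpr fun n => ?_
        rw [mem_closure_iff_nhds]
        intro t ht
        obtain ⟨m, hmt⟩ := (hp t ht).exists
        exact ⟨u m, hmt, Set.mem_iInter.mp (hu m) n⟩
      obtain ⟨k, hk⟩ := Set.mem_iUnion.mp (hVc hpC)
      obtain ⟨m, hmk, hmV⟩ :=
        ((hp (V k) ((hVop k).mem_nhds hk)).and_eventually (eventually_ge_atTop k)).exists
      exact huV m (Set.mem_biUnion (Finset.mem_range.mpr (Nat.lt_succ_of_le hmV)) hmk)
  · rintro ⟨hbase, hcc⟩ u hu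
    by_contra h
    push_neg at h
    set A : ℕ → Set X := fun m => closure (u '' Set.Ici m) with hA
    have hcov : C ⊆ ⋃ m, (A m)ᶜ := by
      intro x hx
      have hx' := h x
      rw [mapClusterPt_iff_frequently] at hx'
      push_neg at hx'
      obtain ⟨s, hs, hfreq⟩ := hx'
      obtain ⟨M, hM⟩ := eventually_atTop.mp hfreq
      refine Set.mem_iUnion.mpr ⟨M, fun hxA => ?_⟩
      obtain ⟨y, hys, hy⟩ := mem_closure_iff_nhds.mp hxA s hs
      obtain ⟨m, hm, rfl⟩ := hy
      exact hM m hm hys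
    obtain ⟨t, ht⟩ := hcc _ (fun m => (isClosed_closure).isOpen_compl) hcov
    set M := t.sup id with hM
    have hCE : C ⊆ (A M)ᶜ := by
      intro x hx
      obtain ⟨m, hmt, hxm⟩ := Set.mem_iUnion₂.mp (ht hx)
      intro hxA
      exact hxm (closure_mono (Set.image_mono (Set.Ici_subset_Ici.mpr (Finset.le_sup (f := id) hmt))) hxA)
    obtain ⟨n, hn⟩ := hbase _ (isClosed_closure).isOpen_compl hCE
    have h1 : u (max n M) ∈ (A M)ᶜ := hn (hdec (le_max_left n M) (hu (max n M)))
    exact h1 (subset_closure ⟨max n M, le_max_right n M, rfl⟩)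
end
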